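/- arXiv:1608.03534 — 7 statements merged into one kernel-verified Lean document; each statement's English description precedes it below -/
import Mathlib

section
/- Let V be an n-dimensional real vector space equipped with a nondegenerate symmetric bilinear form (·,·) of signature (n−2,2), and let C₁, C₂, C₁′, C₂′ ∈ V. Assume that for every (s,t) ∈ [0,1]², the bilinear form (·,·) is negative definite on the 2-dimensional subspace z(s,t) := span{B₁(s), B₂(t)}. Let Q_S be any positive definite quadratic form on V satisfying (x,x) + 2·R(x, z(s,t)) ≥ Q_S(x) for all x ∈ V and all (s,t) ∈ [0,1]². Then every x ∈ V with Φ₂(x) ≠ 0 satisfies (x,x) ≥ Q_S(x). -/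
open Real Set

noncomputable section

lemma exists_convex_zero_of_sign_ne {u v : ℝ} (h : Real.sign u ≠ Real.sign v) :
    ∃ s ∈ Icc (0:ℝ) 1, (1 - s) * u + s * v = 0 := by
  rcases eq_or_ne u 0 with hu | hu
  · exact ⟨0, ⟨le_refl 0, zero_le_one⟩, by simp [hu]⟩
  rcases eq_or_ne v 0 with hv | hv
  · exact ⟨1, ⟨zero_le_one, le_refl 1⟩, by simp [hv]⟩
  rcases hu.lt_or_gt with hu' | hu' <;> rcases hv.lt_or_gt with hv' | hv'
  · exact absurd (by rw [Real.sign_of_neg hu', Real.sign_of_neg hv']) h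
  · -- u < 0 < v
    refine ⟨(-u) / (v - u), ⟨div_nonneg (by linarith) (by linarith), ?_⟩, ?_⟩
    · rw [div_le_one (by linarith)]; linarith
    · have hd : v - u ≠ 0 := by linarith
      field_simp
      ring
  · -- v < 0 < u
    refine ⟨u / (u - v), ⟨div_nonneg (by linarith) (by linarith), ?_⟩, ?_⟩
    · rw [div_le_one (by linarith)]; linarith
    · have hd : u - v ≠ 0 := by linarith
      field_simp
      ring
  · exact absurd (by rw [Real.sign_of_pos hu', Real.sign_of_pos hv']) h

/-- Lemma 4.9 of the paper: if `Q_S` is a positive definite quadratic form with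
`(x,x) + 2R(x,z(s,t)) ≥ Q_S(x)` for all `x` and all `(s,t) ∈ [0,1]²`, then every
`x` with `Φ₂(x) ≠ 0` satisfies `(x,x) ≥ Q_S(x)`.  Here `R(x,z) = −(w,w)` for
the orthogonal projection `w = pr_z(x)`, characterized by `w ∈ z`, `x − w ⊥ z`. -/
theorem inner_self_ge_of_phi_ne_zero
    {V : Type*} [AddCommGroup V] [Module ℝ V]
    (n : ℕ) (hn : 2 ≤ n)
    (B : LinearMap.BilinForm ℝ V) (hsymm : B.IsSymm) (hnd : B.Nondegenerate)
    (bsig : Module.Basis (Fin n) ℝ V)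
    (horth : ∀ i j, i ≠ j → B (bsig i) (bsig j) = 0)
    (hsig : ∀ i : Fin n, ((i : ℕ) < n - 2 → 0 < B (bsig i) (bsig i)) ∧
        (n - 2 ≤ (i : ℕ) → B (bsig i) (bsig i) < 0))
    (C₁ C₂ C₁' C₂' : V)
    (hneg : ∀ s ∈ Icc (0:ℝ) 1, ∀ t ∈ Icc (0:ℝ) 1,
      LinearIndependent ℝ ![(1 - s) • C₁ + s • C₁', (1 - t) • C₂ + t • C₂'] ∧
      ∀ w ∈ Submodule.span ℝ {(1 - s) • C₁ + s • C₁', (1 - t) • C₂ + t • C₂'},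
        w ≠ 0 → B w w < 0)
    (Q : QuadraticForm ℝ V) (hQpos : Q.PosDef)
    (hQ : ∀ x : V, ∀ s ∈ Icc (0:ℝ) 1, ∀ t ∈ Icc (0:ℝ) 1,
        ∀ w ∈ Submodule.span ℝ {(1 - s) • C₁ + s • C₁', (1 - t) • C₂ + t • C₂'},
          (∀ u ∈ Submodule.span ℝ {(1 - s) • C₁ + s • C₁', (1 - t) • C₂ + t • C₂'},
            B (x - w) u = 0) →
          B x x - 2 * B w w ≥ Q x)
    (x : V)
    (hΦ : (1/4 : ℝ) * (Real.sign (B x C₁) - Real.sign (B x C₁')) *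
        (Real.sign (B x C₂) - Real.sign (B x C₂')) ≠ 0) :
    B x x ≥ Q x := by
  have h1 : Real.sign (B x C₁) ≠ Real.sign (B x C₁') := by
    intro h; exact hΦ (by rw [h]; ring)
  have h2 : Real.sign (B x C₂) ≠ Real.sign (B x C₂') := by
    intro h; exact hΦ (by rw [h]; ring)
  obtain ⟨s, hs, hsz⟩ := exists_convex_zero_of_sign_ne h1
  obtain ⟨t, ht, htz⟩ := exists_convex_zero_of_sign_ne h2
  set v1 := (1 - s) • C₁ + s • C₁' with hv1
  set v2 := (1 - t) • C₂ + t • C₂' with hv2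
  have hx1 : B x v1 = 0 := by
    rw [hv1, map_add, map_smul, map_smul, smul_eq_mul, smul_eq_mul]
    exact hsz
  have hx2 : B x v2 = 0 := by
    rw [hv2, map_add, map_smul, map_smul, smul_eq_mul, smul_eq_mul]
    exact htz
  have hker : Submodule.span ℝ {v1, v2} ≤ LinearMap.ker (B x) := by
    rw [Submodule.span_le]
    rintro u hu
    rcases hu with rfl | rfl
    · simpa [LinearMap.mem_ker] using hx1
    · simpa [LinearMap.mem_ker] using hx2
  have key := hQ x s hs t ht 0 (Submodule.zero_mem _)
    (fun u hu => by rw [sub_zero]; exact hker hu)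
  simpa using key
end
end

section
/- Let V be an n-dimensional real vector space equipped with a nondegenerate symmetric bilinear form (·,·) of signature (n−2,2), and let C₁, C₂, C₁′, C₂′ ∈ V. Assume that for every (s,t) ∈ [0,1]², the bilinear form (·,·) is negative definite on the 2-dimensional subspace z(s,t) := span{B₁(s), B₂(t)}. Then every nonzero x ∈ V with Φ₂(x) ≠ 0 satisfies (x,x) > 0. -/
open Real Set

noncomputable section


lemma exists_zero_combo (a b : ℝ) (h : Real.sign a ≠ Real.sign b) :
    ∃ s ∈ Icc (0:ℝ) 1, (1-s)*a + s*b = 0 := by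
  rcases eq_or_ne a 0 with ha | ha
  · exact ⟨0, by norm_num, by simp [ha]⟩
  rcases eq_or_ne b 0 with hb | hb
  · exact ⟨1, by norm_num, by simp [hb]⟩
  have hf : Continuous fun s : ℝ => (1-s)*a + s*b := by continuity
  rcases lt_or_gt_of_ne ha with ha' | ha' <;> rcases lt_or_gt_of_ne hb with hb' | hb'
  · exact absurd (by rw [Real.sign_of_neg ha', Real.sign_of_neg hb']) h
  · have : (0:ℝ) ∈ Icc ((1-(0:ℝ))*a + 0*b) ((1-(1:ℝ))*a + 1*b) := by
      constructor <;> simp <;> linarith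
    obtain ⟨s, hs, hfs⟩ := intermediate_value_Icc (by norm_num : (0:ℝ) ≤ 1) hf.continuousOn this
    exact ⟨s, hs, hfs⟩
  · have : (0:ℝ) ∈ Icc ((1-(1:ℝ))*a + 1*b) ((1-(0:ℝ))*a + 0*b) := by
      constructor <;> simp <;> linarith
    obtain ⟨s, hs, hfs⟩ := intermediate_value_Icc' (by norm_num : (0:ℝ) ≤ 1) hf.continuousOn this
    exact ⟨s, hs, hfs⟩
  · exact absurd (by rw [Real.sign_of_pos ha', Real.sign_of_pos hb']) h

/-- If the form of signature `(n−2,2)` is negative definite on each plane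
`z(s,t) = span{B₁(s), B₂(t)}`, `(s,t) ∈ [0,1]²`, then every nonzero `x` with
`Φ₂(x) ≠ 0` satisfies `(x,x) > 0`. -/
theorem inner_self_pos_of_phi_ne_zero
    {V : Type*} [AddCommGroup V] [Module ℝ V]
    (n : ℕ) (hn : 2 ≤ n)
    (B : LinearMap.BilinForm ℝ V) (hsymm : B.IsSymm) (hnd : B.Nondegenerate)
    (bsig : Module.Basis (Fin n) ℝ V)
    (horth : ∀ i j, i ≠ j → B (bsig i) (bsig j) = 0)
    (hsig : ∀ i : Fin n, ((i : ℕ) < n - 2 → 0 < B (bsig i) (bsig i)) ∧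
        (n - 2 ≤ (i : ℕ) → B (bsig i) (bsig i) < 0))
    (C₁ C₂ C₁' C₂' : V)
    (hneg : ∀ s ∈ Icc (0:ℝ) 1, ∀ t ∈ Icc (0:ℝ) 1,
      LinearIndependent ℝ ![(1 - s) • C₁ + s • C₁', (1 - t) • C₂ + t • C₂'] ∧
      ∀ w ∈ Submodule.span ℝ {(1 - s) • C₁ + s • C₁', (1 - t) • C₂ + t • C₂'},
        w ≠ 0 → B w w < 0)
    (x : V) (hx : x ≠ 0)
    (hΦ : (1/4 : ℝ) * (Real.sign (B x C₁) - Real.sign (B x C₁')) *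
        (Real.sign (B x C₂) - Real.sign (B x C₂')) ≠ 0) :
    0 < B x x := by
  haveI : FiniteDimensional ℝ V := Module.Finite.of_basis bsig
  -- extract sign differences
  have h₁ : Real.sign (B x C₁) ≠ Real.sign (B x C₁') := by
    intro h; apply hΦ; rw [h]; ring
  have h₂ : Real.sign (B x C₂) ≠ Real.sign (B x C₂') := by
    intro h; apply hΦ; rw [h]; ring
  obtain ⟨s, hs, hs0⟩ := exists_zero_combo _ _ h₁
  obtain ⟨t, ht, ht0⟩ := exists_zero_combo _ _ h₂
  set b₁ := (1 - s) • C₁ + s • C₁' with hb₁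
  set b₂ := (1 - t) • C₂ + t • C₂' with hb₂
  obtain ⟨hli, hpl⟩ := hneg s hs t ht
  have hxb₁ : B x b₁ = 0 := by
    rw [hb₁]; simp only [map_add, map_smul, smul_eq_mul]; linarith [hs0]
  have hxb₂ : B x b₂ = 0 := by
    rw [hb₂]; simp only [map_add, map_smul, smul_eq_mul]; linarith [ht0]
  -- x is orthogonal to the plane
  have hker : Submodule.span ℝ {b₁, b₂} ≤ LinearMap.ker (B x) := by
    rw [Submodule.span_le]
    rintro y (rfl | rfl) <;> simp [LinearMap.mem_ker, hxb₁, hxb₂]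
  have hxortho : ∀ p ∈ Submodule.span ℝ ({b₁, b₂} : Set V), B x p = 0 := by
    intro p hp; exact hker hp
  -- x not in plane
  have hxnot : x ∉ Submodule.span ℝ ({b₁, b₂} : Set V) := by
    intro hmem
    have h1 : B x x < 0 := hpl x hmem hx
    have h2 : B x x = 0 := hxortho x hmem
    linarith
  by_contra hcon
  push_neg at hcon
  -- the 3-dim negative semidefinite subspace W
  have hrange2 : Set.range ![b₁, b₂] = ({b₁, b₂} : Set V) := by
    rw [Matrix.range_cons, Matrix.range_cons, Matrix.range_empty]
    ext y; simp; tauto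
  have hli3 : LinearIndependent ℝ ![x, b₁, b₂] := by
    rw [show (![x, b₁, b₂] : Fin 3 → V) = Fin.cons x ![b₁, b₂] from rfl,
      linearIndependent_fin_cons]
    exact ⟨hli, by rwa [hrange2]⟩
  set W := Submodule.span ℝ (Set.range ![x, b₁, b₂]) with hW
  have hrange3 : Set.range ![x, b₁, b₂] = insert x ({b₁, b₂} : Set V) := by
    rw [Matrix.range_cons, Matrix.range_cons, Matrix.range_cons, Matrix.range_empty]
    ext y; simp; tauto
  have hWrank : Module.finrank ℝ W = 3 := by
    rw [finrank_span_eq_card hli3]; simp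
  -- W is negative semidefinite
  have hWneg : ∀ w ∈ W, B w w ≤ 0 := by
    intro w hw
    rw [hW, hrange3, Submodule.span_insert] at hw
    rw [Submodule.mem_sup] at hw
    obtain ⟨y, hy, p, hp, rfl⟩ := hw
    rw [Submodule.mem_span_singleton] at hy
    obtain ⟨c, rfl⟩ := hy
    have hxp : B x p = 0 := hxortho p hp
    have hpx : B p x = 0 := by rw [← hsymm.eq x p] at *; simpa using hxp
    have hpp : B p p ≤ 0 := by
      rcases eq_or_ne p 0 with rfl | hp0
      · simp
      · exact le_of_lt (hpl p hp hp0)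
    have expand : B (c • x + p) (c • x + p) = c * c * B x x + c * B x p + c * B p x + B p p := by
      simp only [map_add, map_smul, smul_eq_mul, LinearMap.add_apply, LinearMap.smul_apply]
      ring
    rw [expand, hxp, hpx]
    nlinarith [mul_self_nonneg c]
  -- the positive definite subspace P
  set v : Fin (n - 2) → V := fun i => bsig (Fin.castLE (Nat.sub_le n 2) i) with hv
  have hvli : LinearIndependent ℝ v :=
    bsig.linearIndependent.comp _ (Fin.castLE_injective _)
  set P := Submodule.span ℝ (Set.range v) with hP
  have hPrank : Module.finrank ℝ P = n - 2 := by
    rw [finrank_span_eq_card hvli]; simp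
  have hPpos : ∀ w ∈ P, w ≠ 0 → 0 < B w w := by
    intro w hw hw0
    rw [hP, Submodule.mem_span_range_iff_exists_fun] at hw
    obtain ⟨c, hc⟩ := hw
    have hci : ∃ i, c i ≠ 0 := by
      by_contra hall
      push_neg at hall
      apply hw0
      rw [← hc]
      simp [hall]
    have hBw : B w w = ∑ i, (c i)^2 * B (v i) (v i) := by
      rw [← hc]
      simp only [map_sum, LinearMap.sum_apply, map_smul, LinearMap.smul_apply, smul_eq_mul]
      refine Finset.sum_congr rfl fun i _ => ?_
      rw [Finset.sum_eq_single i]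
      · ring
      · intro j _ hj
        have : B (v j) (v i) = 0 := horth _ _ (by
          simp only [hv, ne_eq]
          intro h
          exact hj (Fin.castLE_injective _ h))
        simp [this]
      · intro h; exact absurd (Finset.mem_univ i) h
    rw [hBw]
    obtain ⟨i₀, hi₀⟩ := hci
    have hdiag : ∀ i : Fin (n-2), 0 < B (v i) (v i) := by
      intro i
      exact (hsig (Fin.castLE (Nat.sub_le n 2) i)).1 (by simpa using i.isLt)
    apply Finset.sum_pos' (fun i _ => mul_nonneg (sq_nonneg _) (hdiag i).le)
    exact ⟨i₀, Finset.mem_univ i₀, mul_pos (by positivity) (hdiag i₀)⟩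
  -- W ⊓ P = ⊥
  have hinf : W ⊓ P = ⊥ := by
    rw [Submodule.eq_bot_iff]
    intro w hw
    by_contra hw0
    have := hWneg w hw.1
    have := hPpos w hw.2 hw0
    linarith
  have hsum := Submodule.finrank_sup_add_finrank_inf_eq W P
  rw [hinf] at hsum
  have hle : Module.finrank ℝ ↥(W ⊔ P) ≤ n := by
    have := Submodule.finrank_le (W ⊔ P)
    rwa [Module.finrank_eq_card_basis bsig, Fintype.card_fin] at this
  rw [hWrank, hPrank] at hsum
  simp at hsum
  omega
end
end

section
/- Let V be an n-dimensional real vector space equipped with a nondegenerate symmetric bilinear form (·,·) of signature (n−2,2), and let C₁, C₂, C₁′, C₂′ ∈ V. Assume that for every (s,t) ∈ [0,1]², the bilinear form (·,·) is negative definite on the 2-dimensional subspace z(s,t) := span{B₁(s), B₂(t)}. Let L ⊆ V be a lattice (the ℤ-span of an ℝ-basis of V), let μ ∈ V, and let v > 0. Then the family x ↦ Φ₂(x)·exp(−π·v·(x,x)), indexed by x ∈ L + μ, is absolutely summable, i.e. ∑_{x ∈ L+μ} |Φ₂(x)|·e^{−π v (x,x)} < ∞. (This is the termwise absolute convergence of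 the q-series ∑_{x ∈ L+μ} Φ₂(x) q^{(x,x)/2} in Theorem B(b).) -/
open Real Set

noncomputable section


lemma sum_nat_gauss (c m : ℝ) (hc : 0 < c) :
    Summable (fun k : ℕ => Real.exp (-c * ((k : ℝ) + m)^2)) := by
  have h : ∀ k : ℕ, Real.exp (-c * ((k:ℝ) + m)^2)
      ≤ Real.exp (c * (1/4 - m)) * Real.exp (-c) ^ k := by
    intro k
    rw [← Real.exp_nat_mul, ← Real.exp_add]
    apply Real.exp_le_exp.2
    nlinarith [sq_nonneg ((k:ℝ) + m - 1/2)]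
  refine Summable.of_nonneg_of_le (fun k => (Real.exp_pos _).le) h ?_
  exact (summable_geometric_of_lt_one (Real.exp_pos _).le
    (Real.exp_lt_one_iff.2 (by linarith))).mul_left _

lemma sum_int_gauss (c m : ℝ) (hc : 0 < c) :
    Summable (fun k : ℤ => Real.exp (-c * ((k : ℝ) + m)^2)) := by
  apply Summable.of_nat_of_neg
  · exact (sum_nat_gauss c m hc).congr (fun k => by norm_num)
  · exact (sum_nat_gauss c (-m) hc).congr (fun k => by push_cast; ring_nf)

lemma sum_pi_gauss (N : ℕ) (c : ℝ) (hc : 0 < c) (m : Fin N → ℝ) :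
    Summable (fun k : Fin N → ℤ => ∏ i, Real.exp (-c * ((k i : ℝ) + m i)^2)) := by
  induction N with
  | zero => exact summable_of_finite_support (Set.toFinite _)
  | succ N ih =>
    have h := Summable.mul_of_nonneg (sum_int_gauss c (m 0) hc)
      (ih (fun i => m i.succ))
      (fun _ => (Real.exp_pos _).le)
      (fun k => Finset.prod_nonneg fun i _ => (Real.exp_pos _).le)
    have := ((Fin.consEquiv (fun _ : Fin (N+1) => ℤ)).symm.summable_iff
      (f := fun p : ℤ × (Fin N → ℤ) => Real.exp (-c * ((p.1 : ℝ) + m 0)^2) *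
        ∏ i, Real.exp (-c * ((p.2 i : ℝ) + m i.succ)^2))).2 h
    refine this.congr (fun k => ?_)
    simp [Fin.consEquiv, Fin.prod_univ_succ, Fin.tail]

lemma abs_sign_le_one (r : ℝ) : |Real.sign r| ≤ 1 := by
  rcases Real.sign_apply_eq r with h | h | h <;> rw [h] <;> norm_num

lemma exists_zero_of_sign_ne {f : ℝ → ℝ} (hf : Continuous f)
    (h : Real.sign (f 0) ≠ Real.sign (f 1)) : ∃ s ∈ Icc (0:ℝ) 1, f s = 0 := by
  have key : (f 0 ≤ 0 ∧ 0 ≤ f 1) ∨ (f 1 ≤ 0 ∧ 0 ≤ f 0) := by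
    rcases lt_trichotomy (f 0) 0 with h0 | h0 | h0 <;>
      rcases lt_trichotomy (f 1) 0 with h1 | h1 | h1
    · exact absurd (by rw [Real.sign_of_neg h0, Real.sign_of_neg h1]) h
    · exact Or.inl ⟨h0.le, h1.ge⟩
    · exact Or.inl ⟨h0.le, h1.le⟩
    · exact Or.inr ⟨h1.le, h0.ge⟩
    · exact Or.inl ⟨h0.le, h1.ge⟩
    · exact Or.inl ⟨h0.le, h1.le⟩
    · exact Or.inr ⟨h1.le, h0.le⟩
    · exact Or.inr ⟨h1.le, h0.le⟩
    · exact absurd (by rw [Real.sign_of_pos h0, Real.sign_of_pos h1]) h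
  rcases key with ⟨h1, h2⟩ | ⟨h1, h2⟩
  · obtain ⟨s, hs, hfs⟩ := intermediate_value_Icc (by norm_num : (0:ℝ) ≤ 1)
      hf.continuousOn (⟨h1, h2⟩ : (0:ℝ) ∈ Icc (f 0) (f 1))
    exact ⟨s, hs, hfs⟩
  · obtain ⟨s, hs, hfs⟩ := intermediate_value_Icc' (by norm_num : (0:ℝ) ≤ 1)
      hf.continuousOn (⟨h1, h2⟩ : (0:ℝ) ∈ Icc (f 1) (f 0))
    exact ⟨s, hs, hfs⟩

section
variable {V : Type*} [AddCommGroup V] [Module ℝ V] {n : ℕ}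

lemma diag_expand (B : LinearMap.BilinForm ℝ V) (bsig : Module.Basis (Fin n) ℝ V)
    (horth : ∀ i j, i ≠ j → B (bsig i) (bsig j) = 0) (w : V) :
    B w w = ∑ i, (bsig.repr w i)^2 * B (bsig i) (bsig i) := by
  calc B w w = B (∑ i, bsig.repr w i • bsig i) (∑ j, bsig.repr w j • bsig j) := by
        rw [bsig.sum_repr w]
    _ = ∑ j, ∑ i, bsig.repr w i * bsig.repr w j * B (bsig i) (bsig j) := by
        rw [map_sum]
        refine Finset.sum_congr rfl fun j _ => ?_
        rw [map_smul, smul_eq_mul, map_sum, LinearMap.coe_sum, Finset.sum_apply,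
          Finset.mul_sum]
        refine Finset.sum_congr rfl fun i _ => ?_
        rw [map_smul, LinearMap.smul_apply, smul_eq_mul]; ring
    _ = ∑ i, ∑ j, bsig.repr w i * bsig.repr w j * B (bsig i) (bsig j) :=
        Finset.sum_comm
    _ = ∑ i, (bsig.repr w i)^2 * B (bsig i) (bsig i) := by
        refine Finset.sum_congr rfl fun i _ => ?_
        rw [Finset.sum_eq_single i]
        · ring
        · intro j _ hj; rw [horth i j (Ne.symm hj), mul_zero]
        · intro h; exact absurd (Finset.mem_univ i) h

end

section
variable {V : Type*} [AddCommGroup V] [Module ℝ V]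

lemma key_pos {n : ℕ} (hn : 2 ≤ n)
    (B : LinearMap.BilinForm ℝ V) (hsymm : B.IsSymm)
    (bsig : Module.Basis (Fin n) ℝ V)
    (horth : ∀ i j, i ≠ j → B (bsig i) (bsig j) = 0)
    (hsig : ∀ i : Fin n, ((i : ℕ) < n - 2 → 0 < B (bsig i) (bsig i)) ∧
        (n - 2 ≤ (i : ℕ) → B (bsig i) (bsig i) < 0))
    (x z₁ z₂ : V) (hx : x ≠ 0)
    (hli : LinearIndependent ℝ ![z₁, z₂])
    (hnegdef : ∀ w ∈ Submodule.span ℝ ({z₁, z₂} : Set V), w ≠ 0 → B w w < 0)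
    (h1 : B x z₁ = 0) (h2 : B x z₂ = 0) : 0 < B x x := by
  by_contra hle
  push_neg at hle
  have hd1 : n - 2 < n := by omega
  have hd2 : n - 1 < n := by omega
  -- x is orthogonal to the span of z₁, z₂
  have hperp : ∀ u ∈ Submodule.span ℝ ({z₁, z₂} : Set V), B x u = 0 := by
    intro u hu
    obtain ⟨a, b, rfl⟩ := Submodule.mem_span_pair.1 hu
    simp [map_add, map_smul, h1, h2]
  -- B is negative semidefinite on span {x, z₁, z₂}
  have semidef : ∀ w ∈ Submodule.span ℝ ({x, z₁, z₂} : Set V), B w w ≤ 0 := by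
    intro w hw
    obtain ⟨a, u, hu, rfl⟩ := Submodule.mem_span_insert.1 hw
    have hxu : B x u = 0 := hperp u hu
    have hux : B u x = 0 := by
      have := hsymm.eq u x; rw [this, hxu]
    have huu : B u u ≤ 0 := by
      rcases eq_or_ne u 0 with rfl | hu0
      · simp
      · exact (hnegdef u hu hu0).le
    have expand : B (a • x + u) (a • x + u) = a * a * B x x + a * B x u + a * B u x + B u u := by
      simp only [map_add, map_smul, LinearMap.add_apply, LinearMap.smul_apply, smul_eq_mul]
      ring
    rw [expand, hxu, hux]
    nlinarith [mul_self_nonneg a]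
  -- the projection to the last two coordinates kills no nonzero vector of the span
  set i1 : Fin n := ⟨n - 2, hd1⟩
  set i2 : Fin n := ⟨n - 1, hd2⟩
  set T : V →ₗ[ℝ] (Fin 2 → ℝ) := LinearMap.pi ![bsig.coord i1, bsig.coord i2] with hT
  have hker : ∀ w ∈ Submodule.span ℝ ({x, z₁, z₂} : Set V), T w = 0 → w = 0 := by
    intro w hw hTw
    have e1 : bsig.repr w i1 = 0 := congr_fun hTw 0
    have e2 : bsig.repr w i2 = 0 := congr_fun hTw 1
    have hnn : ∀ i : Fin n, 0 ≤ (bsig.repr w i)^2 * B (bsig i) (bsig i) := by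
      intro i
      rcases lt_or_ge (i : ℕ) (n - 2) with hi | hi
      · exact mul_nonneg (sq_nonneg _) ((hsig i).1 hi).le
      · have : i = i1 ∨ i = i2 := by
          have hlt := i.isLt
          rcases Nat.lt_or_ge (i : ℕ) (n - 1) with h | h
          · left; exact Fin.ext (show (i : ℕ) = n - 2 by omega)
          · right; exact Fin.ext (show (i : ℕ) = n - 1 by omega)
        rcases this with rfl | rfl <;> simp [e1, e2]
    have hzero : ∀ i : Fin n, (bsig.repr w i)^2 * B (bsig i) (bsig i) = 0 := by
      have hsum : ∑ i, (bsig.repr w i)^2 * B (bsig i) (bsig i) = 0 := by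
        have := diag_expand B bsig horth w
        have hle2 := semidef w hw
        have hge : 0 ≤ ∑ i, (bsig.repr w i)^2 * B (bsig i) (bsig i) :=
          Finset.sum_nonneg fun i _ => hnn i
        linarith [this ▸ hle2]
      intro i
      exact (Finset.sum_eq_zero_iff_of_nonneg (fun i _ => hnn i)).1 hsum i (Finset.mem_univ i)
    have hrepr : ∀ i : Fin n, bsig.repr w i = 0 := by
      intro i
      rcases lt_or_ge (i : ℕ) (n - 2) with hi | hi
      · have := hzero i
        have hdpos := (hsig i).1 hi
        have : (bsig.repr w i)^2 = 0 := by
          rcases mul_eq_zero.1 this with h | h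
          · exact h
          · exact absurd h hdpos.ne'
        exact pow_eq_zero_iff (by norm_num) |>.1 this
      · have : i = i1 ∨ i = i2 := by
          have hlt := i.isLt
          rcases Nat.lt_or_ge (i : ℕ) (n - 1) with h | h
          · left; exact Fin.ext (show (i : ℕ) = n - 2 by omega)
          · right; exact Fin.ext (show (i : ℕ) = n - 1 by omega)
        rcases this with rfl | rfl
        · exact e1
        · exact e2
    have : bsig.repr w = 0 := Finsupp.ext hrepr
    have := congrArg bsig.repr.symm this
    simpa using this
  -- x, z₁, z₂ are linearly independent
  have hxnotin : x ∉ Submodule.span ℝ ({z₁, z₂} : Set V) := by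
    intro hmem
    exact absurd (hperp x hmem) (hnegdef x hmem hx).ne
  have li3 : LinearIndependent ℝ ![x, z₁, z₂] := by
    rw [show (![x, z₁, z₂] : Fin 3 → V) = Fin.cons x ![z₁, z₂] from rfl,
      linearIndependent_fin_cons]
    refine ⟨hli, ?_⟩
    rwa [show Set.range ![z₁, z₂] = ({z₁, z₂} : Set V) by
      ext y; simp [Matrix.range_cons, Matrix.range_empty]; tauto]
  -- map by T, get 3 independent vectors in ℝ²
  have hdisj : Disjoint (Submodule.span ℝ (Set.range ![x, z₁, z₂])) (LinearMap.ker T) := by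
    rw [Submodule.disjoint_def]
    intro w hw hwk
    have hrange : Set.range ![x, z₁, z₂] = ({x, z₁, z₂} : Set V) := by
      ext y; simp [Matrix.range_cons, Matrix.range_empty]; tauto
    exact hker w (hrange ▸ hw) (LinearMap.mem_ker.1 hwk)
  have li3' := li3.map hdisj
  have hcard := li3'.fintype_card_le_finrank
  rw [Module.finrank_fin_fun] at hcard
  simp [Fintype.card_fin] at hcard
end


/-- Theorem B(b) / Proposition 4.10 of the paper: termwise absolute convergence
of the holomorphic generating series `∑_{x ∈ L+μ} Φ₂(x) q^{(x,x)/2}`: the family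
`x ↦ Φ₂(x)·e^{−πv(x,x)}`, indexed by `x ∈ L + μ` for a lattice `L` (the ℤ-span
of an ℝ-basis of `V`), is absolutely summable. -/
theorem summable_phi_qseries
    {V : Type*} [AddCommGroup V] [Module ℝ V]
    (n : ℕ) (hn : 2 ≤ n)
    (B : LinearMap.BilinForm ℝ V) (hsymm : B.IsSymm) (hnd : B.Nondegenerate)
    (bsig : Module.Basis (Fin n) ℝ V)
    (horth : ∀ i j, i ≠ j → B (bsig i) (bsig j) = 0)
    (hsig : ∀ i : Fin n, ((i : ℕ) < n - 2 → 0 < B (bsig i) (bsig i)) ∧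
        (n - 2 ≤ (i : ℕ) → B (bsig i) (bsig i) < 0))
    (C₁ C₂ C₁' C₂' : V)
    (hneg : ∀ s ∈ Icc (0:ℝ) 1, ∀ t ∈ Icc (0:ℝ) 1,
      LinearIndependent ℝ ![(1 - s) • C₁ + s • C₁', (1 - t) • C₂ + t • C₂'] ∧
      ∀ w ∈ Submodule.span ℝ {(1 - s) • C₁ + s • C₁', (1 - t) • C₂ + t • C₂'},
        w ≠ 0 → B w w < 0)
    (bL : Module.Basis (Fin n) ℝ V) (μ : V) (v : ℝ) (hv : 0 < v) :
    Summable (fun x : {x : V // ∃ l ∈ Submodule.span ℤ (Set.range ⇑bL), x = l + μ} =>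
      |(1/4 : ℝ) * (Real.sign (B x C₁) - Real.sign (B x C₁')) *
          (Real.sign (B x C₂) - Real.sign (B x C₂'))| *
        Real.exp (-Real.pi * v * B x x)) := by
  classical
  have hn0 : (0:ℝ) < (n:ℝ) := by
    have : 0 < n := by omega
    exact_mod_cast this
  -- the linear parametrization of V by coordinates
  have bilin_left : ∀ (y : Fin n → ℝ) (w : V),
      B (∑ i, y i • bL i) w = ∑ i, y i * B (bL i) w := by
    intro y w
    rw [map_sum, LinearMap.coe_sum, Finset.sum_apply]
    exact Finset.sum_congr rfl fun i _ => by
      rw [map_smul, LinearMap.smul_apply, smul_eq_mul]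
  set gv : (Fin n → ℝ) → V := fun y => ∑ i, y i • bL i with hgvdef
  have hgv : ∀ y, gv y = bL.equivFun.symm y := fun y => (bL.equivFun_symm_apply y).symm
  have hgv_smul : ∀ (c : ℝ) (y : Fin n → ℝ), gv (c • y) = c • gv y := by
    intro c y; rw [hgv, hgv, map_smul]
  have hgv_repr : ∀ x : V, gv (fun i => bL.repr x i) = x := fun x => bL.sum_repr x
  -- continuity facts
  have happ : ∀ i : Fin n, Continuous fun y : Fin n → ℝ => y i := fun i => continuous_apply i
  have hcontBw : ∀ w : V, Continuous fun y : Fin n → ℝ => B (gv y) w := by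
    intro w
    have he : (fun y : Fin n → ℝ => B (gv y) w) = fun y => ∑ i, y i * B (bL i) w :=
      funext fun y => bilin_left y w
    rw [he]
    exact continuous_finset_sum _ fun i _ => (happ i).mul continuous_const
  have hQcont : Continuous fun y : Fin n → ℝ => B (gv y) (gv y) := by
    have he : (fun y : Fin n → ℝ => B (gv y) (gv y)) = fun y => ∑ i, y i * B (bL i) (gv y) :=
      funext fun y => bilin_left y (gv y)
    rw [he]
    refine continuous_finset_sum _ fun i _ => (happ i).mul ?_
    have he2 : (fun y : Fin n → ℝ => B (bL i) (gv y)) = fun y => B (gv y) (bL i) := by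
      funext y
      have := hsymm.eq (gv y) (bL i)
      rw [this]
    rw [he2]; exact hcontBw (bL i)
  have hcontF : ∀ w w' : V, Continuous fun p : (Fin n → ℝ) × ℝ =>
      B (gv p.1) ((1 - p.2) • w + p.2 • w') := by
    intro w w'
    have he : (fun p : (Fin n → ℝ) × ℝ => B (gv p.1) ((1 - p.2) • w + p.2 • w'))
        = fun p => (1 - p.2) * B (gv p.1) w + p.2 * B (gv p.1) w' := by
      funext p; rw [map_add, map_smul, map_smul]; simp [smul_eq_mul]
    rw [he]
    exact ((continuous_const.sub continuous_snd).mul ((hcontBw w).comp continuous_fst)).add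
      (continuous_snd.mul ((hcontBw w').comp continuous_fst))
  -- the compact set of unit vectors orthogonal to some pair (z₁ s, z₂ t)
  set K' : Set ((Fin n → ℝ) × ℝ × ℝ) :=
    {p | ‖p.1‖ = 1 ∧ p.2.1 ∈ Icc (0:ℝ) 1 ∧ p.2.2 ∈ Icc (0:ℝ) 1 ∧
      B (gv p.1) ((1 - p.2.1) • C₁ + p.2.1 • C₁') = 0 ∧
      B (gv p.1) ((1 - p.2.2) • C₂ + p.2.2 • C₂') = 0} with hK'def
  have hK'cpt : IsCompact K' := by
    have hsub : K' ⊆ (Metric.sphere (0 : Fin n → ℝ) 1) ×ˢ (Icc (0:ℝ) 1 ×ˢ Icc (0:ℝ) 1) := by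
      rintro ⟨y, s, t⟩ ⟨h1, h2, h3, -, -⟩
      exact ⟨by simpa using h1, h2, h3⟩
    have hcpt : IsCompact ((Metric.sphere (0 : Fin n → ℝ) 1) ×ˢ (Icc (0:ℝ) 1 ×ˢ Icc (0:ℝ) 1)) :=
      (isCompact_sphere _ _).prod (isCompact_Icc.prod isCompact_Icc)
    refine IsCompact.of_isClosed_subset hcpt ?_ hsub
    have c1 : IsClosed {p : (Fin n → ℝ) × ℝ × ℝ | ‖p.1‖ = 1} :=
      isClosed_eq (continuous_norm.comp continuous_fst) continuous_const
    have c2 : IsClosed {p : (Fin n → ℝ) × ℝ × ℝ | p.2.1 ∈ Icc (0:ℝ) 1} :=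
      isClosed_Icc.preimage (continuous_fst.comp continuous_snd)
    have c3 : IsClosed {p : (Fin n → ℝ) × ℝ × ℝ | p.2.2 ∈ Icc (0:ℝ) 1} :=
      isClosed_Icc.preimage (continuous_snd.comp continuous_snd)
    have c4 : IsClosed {p : (Fin n → ℝ) × ℝ × ℝ |
        B (gv p.1) ((1 - p.2.1) • C₁ + p.2.1 • C₁') = 0} :=
      isClosed_eq ((hcontF C₁ C₁').comp
        (continuous_fst.prodMk (continuous_fst.comp continuous_snd))) continuous_const
    have c5 : IsClosed {p : (Fin n → ℝ) × ℝ × ℝ |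
        B (gv p.1) ((1 - p.2.2) • C₂ + p.2.2 • C₂') = 0} :=
      isClosed_eq ((hcontF C₂ C₂').comp
        (continuous_fst.prodMk (continuous_snd.comp continuous_snd))) continuous_const
    exact c1.inter (c2.inter (c3.inter (c4.inter c5)))
  have hKpos : ∀ p ∈ K', 0 < B (gv p.1) (gv p.1) := by
    rintro ⟨y, s, t⟩ ⟨hy, hs, ht, hF1, hF2⟩
    have hy0 : y ≠ 0 := by
      intro h; rw [h] at hy; simp at hy
    have hx0 : gv y ≠ 0 := by
      intro h
      apply hy0
      have h2 : bL.equivFun.symm y = 0 := by rw [← hgv]; exact h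
      have h3 := congrArg bL.equivFun h2
      rwa [LinearEquiv.apply_symm_apply, map_zero] at h3
    obtain ⟨hli, hnegdef⟩ := hneg s hs t ht
    exact key_pos hn B hsymm bsig horth hsig (gv y) _ _ hx0 hli hnegdef hF1 hF2
  obtain ⟨ε, hεpos, hεlb⟩ : ∃ ε > (0:ℝ), ∀ p ∈ K', ε ≤ B (gv p.1) (gv p.1) := by
    rcases K'.eq_empty_or_nonempty with hKe | hKne
    · exact ⟨1, one_pos, by simp [hKe]⟩
    · obtain ⟨p₀, hp₀, hmin⟩ := hK'cpt.exists_isMinOn hKne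
        ((hQcont.comp continuous_fst).continuousOn)
      exact ⟨_, hKpos p₀ hp₀, fun p hp => hmin hp⟩
  -- quantitative positivity
  have hscale : ∀ x : V,
      (∃ s ∈ Icc (0:ℝ) 1, B x ((1 - s) • C₁ + s • C₁') = 0) →
      (∃ t ∈ Icc (0:ℝ) 1, B x ((1 - t) • C₂ + t • C₂') = 0) →
      ε * ‖(fun i => bL.repr x i : Fin n → ℝ)‖^2 ≤ B x x := by
    intro x hs ht
    rcases eq_or_ne x 0 with rfl | hx0
    · have : (fun i => bL.repr (0:V) i : Fin n → ℝ) = 0 := by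
        funext i; simp
      rw [this]
      simp
    obtain ⟨s, hsI, hBs⟩ := hs
    obtain ⟨t, htI, hBt⟩ := ht
    set r : Fin n → ℝ := fun i => bL.repr x i with hrdef
    have hrne : r ≠ 0 := by
      intro h
      apply hx0
      have hx : gv r = x := hgv_repr x
      rw [h] at hx
      rw [← hx, hgv]
      simp
    have hrpos : 0 < ‖r‖ := norm_pos_iff.2 hrne
    set y : Fin n → ℝ := ‖r‖⁻¹ • r with hydef
    have hyn : ‖y‖ = 1 := by
      rw [hydef, norm_smul, norm_inv, norm_norm]
      field_simp
    have hgy : gv y = ‖r‖⁻¹ • x := by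
      rw [hydef, hgv_smul, hgv_repr]
    have hmem : (y, s, t) ∈ K' := by
      refine ⟨hyn, hsI, htI, ?_, ?_⟩
      · show B (gv y) _ = 0
        rw [hgy, map_smul, LinearMap.smul_apply, hBs, smul_zero]
      · show B (gv y) _ = 0
        rw [hgy, map_smul, LinearMap.smul_apply, hBt, smul_zero]
    have hlb := hεlb (y, s, t) hmem
    have hBy : B (gv (y, s, t).1) (gv (y, s, t).1) = ‖r‖⁻¹ * (‖r‖⁻¹ * B x x) := by
      show B (gv y) (gv y) = _
      rw [hgy]
      simp only [map_smul, LinearMap.smul_apply, smul_eq_mul]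
    rw [hBy] at hlb
    have hr0 : ‖r‖ ≠ 0 := hrpos.ne'
    calc ε * ‖r‖^2 = ‖r‖^2 * ε := mul_comm _ _
      _ ≤ ‖r‖^2 * (‖r‖⁻¹ * (‖r‖⁻¹ * B x x)) :=
          mul_le_mul_of_nonneg_left hlb (le_of_lt (pow_pos hrpos 2))
      _ = B x x := by field_simp
  -- from a sign change, find an orthogonal point on the segment
  have hsign : ∀ (x w w' : V), Real.sign (B x w) ≠ Real.sign (B x w') →
      ∃ s ∈ Icc (0:ℝ) 1, B x ((1 - s) • w + s • w') = 0 := by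
    intro x w w' h
    have hc : Continuous fun s : ℝ => B x ((1 - s) • w + s • w') := by
      have he : (fun s : ℝ => B x ((1 - s) • w + s • w'))
          = fun s => (1 - s) * B x w + s * B x w' := by
        funext s; rw [map_add, map_smul, map_smul]; simp [smul_eq_mul]
      rw [he]
      exact ((continuous_const.sub continuous_id).mul continuous_const).add
        (continuous_id.mul continuous_const)
    have h0 : B x ((1 - (0:ℝ)) • w + (0:ℝ) • w') = B x w := by simp
    have h1 : B x ((1 - (1:ℝ)) • w + (1:ℝ) • w') = B x w' := by simp
    exact exists_zero_of_sign_ne hc (by rw [h0, h1]; exact h)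
  -- the comparison constant
  set c : ℝ := Real.pi * v * ε / n with hcdef
  have hcpos : 0 < c := by
    apply div_pos _ hn0
    have := Real.pi_pos
    positivity
  -- pointwise bound
  have hbound : ∀ x : {x : V // ∃ l ∈ Submodule.span ℤ (Set.range ⇑bL), x = l + μ},
      |(1/4 : ℝ) * (Real.sign (B x C₁) - Real.sign (B x C₁')) *
          (Real.sign (B x C₂) - Real.sign (B x C₂'))| *
        Real.exp (-Real.pi * v * B x x)
      ≤ Real.exp (-c * ∑ i, (bL.repr x i)^2) := by
    intro x
    by_cases hΦ : (Real.sign (B x C₁) - Real.sign (B x C₁')) = 0 ∨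
        (Real.sign (B x C₂) - Real.sign (B x C₂')) = 0
    · rcases hΦ with h | h <;> rw [h] <;> simp [(Real.exp_pos _).le]
    push_neg at hΦ
    obtain ⟨h1ne, h2ne⟩ := hΦ
    have hBxx : ε * ‖(fun i => bL.repr (x:V) i : Fin n → ℝ)‖^2 ≤ B x x :=
      hscale x (hsign x C₁ C₁' (sub_ne_zero.1 h1ne)) (hsign x C₂ C₂' (sub_ne_zero.1 h2ne))
    set r : Fin n → ℝ := fun i => bL.repr (x:V) i with hrdef
    have hsum_le : ∑ i, (bL.repr (x:V) i)^2 ≤ (n:ℝ) * ‖r‖^2 := by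
      have hterm : ∀ i : Fin n, (bL.repr (x:V) i)^2 ≤ ‖r‖^2 := by
        intro i
        have h := norm_le_pi_norm r i
        have habs : |bL.repr (x:V) i| ≤ ‖r‖ := by
          simpa [hrdef, Real.norm_eq_abs] using h
        calc (bL.repr (x:V) i)^2 = |bL.repr (x:V) i|^2 := (sq_abs _).symm
          _ ≤ ‖r‖^2 := pow_le_pow_left₀ (abs_nonneg _) habs 2
      calc ∑ i, (bL.repr (x:V) i)^2 ≤ ∑ _i : Fin n, ‖r‖^2 :=
            Finset.sum_le_sum fun i _ => hterm i
        _ = (n:ℝ) * ‖r‖^2 := by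
            rw [Finset.sum_const, Finset.card_univ, Fintype.card_fin, nsmul_eq_mul]
    have hΦle : |(1/4 : ℝ) * (Real.sign (B x C₁) - Real.sign (B x C₁')) *
        (Real.sign (B x C₂) - Real.sign (B x C₂'))| ≤ 1 := by
      have habs2 : ∀ a b : ℝ, |Real.sign a - Real.sign b| ≤ 2 := by
        intro a b
        have h1 := abs_sign_le_one a
        have h2 := abs_sign_le_one b
        have := abs_sub (Real.sign a) (Real.sign b)
        calc |Real.sign a - Real.sign b| ≤ |Real.sign a| + |Real.sign b| := abs_sub _ _
          _ ≤ 2 := by linarith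
      rw [abs_mul, abs_mul]
      have h1 := habs2 (B x C₁) (B x C₁')
      have h2 := habs2 (B x C₂) (B x C₂')
      have h3 : |(1/4 : ℝ)| = 1/4 := by norm_num
      rw [h3]
      nlinarith [abs_nonneg (Real.sign (B x C₁) - Real.sign (B x C₁')),
        abs_nonneg (Real.sign (B x C₂) - Real.sign (B x C₂'))]
    have hA : -Real.pi * v * B x x ≤ -c * ∑ i, (bL.repr (x:V) i)^2 := by
      have e1 : c * ∑ i, (bL.repr (x:V) i)^2 ≤ c * ((n:ℝ) * ‖r‖^2) :=
        mul_le_mul_of_nonneg_left hsum_le hcpos.le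
      have e2 : c * ((n:ℝ) * ‖r‖^2) = Real.pi * v * (ε * ‖r‖^2) := by
        rw [hcdef]; field_simp
      have e3 : Real.pi * v * (ε * ‖r‖^2) ≤ Real.pi * v * B x x := by
        apply mul_le_mul_of_nonneg_left hBxx
        have := Real.pi_pos
        positivity
      linarith
    calc |(1/4 : ℝ) * (Real.sign (B x C₁) - Real.sign (B x C₁')) *
          (Real.sign (B x C₂) - Real.sign (B x C₂'))| * Real.exp (-Real.pi * v * B x x)
        ≤ 1 * Real.exp (-Real.pi * v * B x x) :=
          mul_le_mul_of_nonneg_right hΦle (Real.exp_pos _).le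
      _ = Real.exp (-Real.pi * v * B x x) := one_mul _
      _ ≤ Real.exp (-c * ∑ i, (bL.repr (x:V) i)^2) := Real.exp_le_exp.2 hA
  refine Summable.of_nonneg_of_le
    (fun x => mul_nonneg (abs_nonneg _) (Real.exp_pos _).le) hbound ?_
  -- summability of the Gaussian majorant over the shifted lattice
  set m : Fin n → ℝ := fun i => bL.repr μ i with hmdef
  have hmemspan : ∀ k : Fin n → ℤ,
      (∑ i, ((k i : ℝ)) • bL i) ∈ Submodule.span ℤ (Set.range ⇑bL) := by
    intro k
    refine Submodule.sum_mem _ fun i _ => ?_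
    rw [Int.cast_smul_eq_zsmul]
    exact Submodule.smul_mem _ _ (Submodule.subset_span (Set.mem_range_self i))
  set ψ : (Fin n → ℤ) → {x : V // ∃ l ∈ Submodule.span ℤ (Set.range ⇑bL), x = l + μ} :=
    fun k => ⟨(∑ i, ((k i : ℝ)) • bL i) + μ, ⟨∑ i, ((k i : ℝ)) • bL i, hmemspan k, rfl⟩⟩
    with hψdef
  have hinj : Function.Injective ψ := by
    intro k k' h
    have h1 : (∑ i, ((k i : ℝ)) • bL i) = ∑ i, ((k' i : ℝ)) • bL i := by
      have := congrArg Subtype.val h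
      exact add_right_cancel this
    have h1' : bL.equivFun.symm (fun i => ((k i : ℝ))) =
        bL.equivFun.symm (fun i => ((k' i : ℝ))) := by
      rw [bL.equivFun_symm_apply, bL.equivFun_symm_apply]
      exact h1
    have h2 := bL.equivFun.symm.injective h1'
    funext i
    have := congr_fun h2 i
    exact_mod_cast this
  have hsurj : Function.Surjective ψ := by
    rintro ⟨x, l, hl, rfl⟩
    obtain ⟨kk, hkk⟩ := (Submodule.mem_span_range_iff_exists_fun ℤ).1 hl
    refine ⟨kk, ?_⟩
    apply Subtype.ext
    show (∑ i, ((kk i : ℝ)) • bL i) + μ = l + μ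
    rw [← hkk]
    congr 1
    exact Finset.sum_congr rfl fun i _ => Int.cast_smul_eq_zsmul ℝ _ _
  rw [← (Equiv.ofBijective ψ ⟨hinj, hsurj⟩).summable_iff]
  have hrepr : ∀ (k : Fin n → ℤ) (i : Fin n),
      bL.repr ((ψ k : V)) i = (k i : ℝ) + m i := by
    intro k i
    show bL.repr ((∑ j, ((k j : ℝ)) • bL j) + μ) i = _
    rw [map_add, Finsupp.add_apply]
    have h := congr_fun (bL.repr_sum_self (fun j => ((k j : ℝ)))) i
    rw [h]
  refine ((sum_pi_gauss n c hcpos m).congr (fun k => ?_))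
  show (∏ i, Real.exp (-c * ((k i : ℝ) + m i)^2)) = _
  rw [← Real.exp_sum, ← Finset.mul_sum]
  congr 1
  congr 1
  exact Finset.sum_congr rfl fun i _ => (congrArg (· ^ 2) (hrepr k i)).symm
end
end

section
/- Let V be an n-dimensional real vector space equipped with a nondegenerate symmetric bilinear form (·,·) of signature (n−r,r) with 1 ≤ r ≤ n, and let C_j, C_j′ ∈ V for j = 1, …, r. Assume that for every s = (s_1,…,s_r) ∈ [0,1]^r, the bilinear form (·,·) is negative definite on the r-dimensional subspace span{B_1(s_1), …, B_r(s_r)} (equivalently, the r×r Gram matrix of (B_1(s_1), …, B_r(s_r)) is negative definite). Let L ⊆ V be a lattice (the ℤ-span of an ℝ-basis of V), let μ ∈ V, and let v > 0. Then the family x ↦ Φ_r(x)·exp(−π·v·(x,x)), indexed by x ∈ L + μ, is absolutely summable, i.e. ∑_{x ∈ L+μ} |Φ_r(x)|·e^{−π v (x,x)} < ∞. -/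
open Real Set

noncomputable section

set_option maxHeartbeats 1000000

private lemma summable_exp_shift (b t : ℝ) (hb : 0 < b) :
    Summable fun k : ℤ => Real.exp (-b * (k + t)^2) := by
  have h := summable_pow_mul_jacobiTheta₂_term_bound (b * |t| / π) (T := b / π)
    (by positivity) 0
  refine h.of_nonneg_of_le (fun k => (Real.exp_pos _).le) (fun k => ?_)
  simp only [pow_zero, one_mul, Int.cast_abs]
  apply Real.exp_le_exp.mpr
  have : -π * (b / π * (k:ℝ) ^ 2 - 2 * (b * |t| / π) * |(k:ℝ)|)
      = -b * (k:ℝ)^2 + 2 * b * |t| * |(k:ℝ)| := by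
    field_simp
    ring
  rw [this]
  have h1 : -(2 * b * ((k:ℝ) * t)) ≤ 2 * b * |t| * |(k:ℝ)| := by
    have := abs_mul (k:ℝ) t
    nlinarith [neg_abs_le ((k:ℝ) * t), abs_nonneg ((k:ℝ)*t)]
  nlinarith [sq_nonneg t]


private lemma summable_pi_int {n : ℕ} (f : Fin n → ℤ → ℝ) (h : ∀ i, Summable (f i))
    (hpos : ∀ i k, 0 ≤ f i k) :
    Summable fun m : Fin n → ℤ => ∏ i, f i (m i) := by
  induction n with
  | zero =>
    simp only [Finset.univ_eq_empty, Finset.prod_empty]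
    exact summable_of_finite_support (Set.toFinite _)
  | succ n ih =>
    rw [← (Fin.consEquiv (fun _ : Fin (n+1) => ℤ)).summable_iff]
    have heq : ((fun m : Fin (n+1) → ℤ => ∏ i, f i (m i)) ∘ (Fin.consEquiv (fun _ => ℤ)))
        = fun p : ℤ × (Fin n → ℤ) => f 0 p.1 * (fun m : Fin n → ℤ => ∏ i : Fin n, f i.succ (m i)) p.2 := by
      funext p
      simp [Fin.prod_univ_succ, Fin.consEquiv]
    rw [heq]
    exact Summable.mul_of_nonneg (f := f 0) (g := fun m : Fin n → ℤ => ∏ i : Fin n, f i.succ (m i))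
      (h 0) (ih (fun i => f i.succ) (fun i => h i.succ) (fun i k => hpos _ _))
      (fun k => hpos _ _) (fun m => Finset.prod_nonneg fun i _ => hpos _ _)


private lemma bilin_diag_expand {V : Type*} [AddCommGroup V] [Module ℝ V] {n : ℕ}
    (B : LinearMap.BilinForm ℝ V) (bsig : Module.Basis (Fin n) ℝ V)
    (horth : ∀ i j, i ≠ j → B (bsig i) (bsig j) = 0) (z : V) :
    B z z = ∑ i, (bsig.repr z i)^2 * B (bsig i) (bsig i) := by
  conv_lhs => rw [← bsig.sum_repr z]
  rw [LinearMap.BilinForm.sum_left]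
  refine Finset.sum_congr rfl fun i _ => ?_
  rw [LinearMap.BilinForm.smul_left, LinearMap.BilinForm.sum_right]
  rw [Finset.sum_eq_single i]
  · rw [LinearMap.BilinForm.smul_right]; ring
  · intro j _ hj
    rw [LinearMap.BilinForm.smul_right, horth i j (Ne.symm hj), mul_zero]
  · intro hi; exact absurd (Finset.mem_univ i) hi

lemma posdef_orthocomp {V : Type*} [AddCommGroup V] [Module ℝ V] {n r : ℕ} (hrn : r ≤ n)
    (B : LinearMap.BilinForm ℝ V) (hsymm : B.IsSymm)
    (bsig : Module.Basis (Fin n) ℝ V)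
    (horth : ∀ i j, i ≠ j → B (bsig i) (bsig j) = 0)
    (hsig : ∀ i : Fin n, ((i:ℕ) < n - r → 0 < B (bsig i) (bsig i)) ∧
      (n - r ≤ (i:ℕ) → B (bsig i) (bsig i) < 0))
    (D : Fin r → V) (hLI : LinearIndependent ℝ D)
    (hnegW : ∀ w ∈ Submodule.span ℝ (Set.range D), w ≠ 0 → B w w < 0)
    (x : V) (hx : ∀ j, B x (D j) = 0) (hx0 : x ≠ 0) : 0 < B x x := by
  haveI : FiniteDimensional ℝ V := Module.Basis.finiteDimensional_of_finite bsig
  by_contra hc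
  push_neg at hc
  set W : Submodule ℝ V := Submodule.span ℝ (Set.range D) with hW
  -- x is orthogonal to all of W
  have horthW : ∀ w ∈ W, B x w = 0 := by
    intro w hw
    have : W ≤ LinearMap.ker (B x) := by
      rw [hW, Submodule.span_le]
      rintro _ ⟨j, rfl⟩
      exact hx j
    exact this hw
  -- x ∉ W
  have hxW : x ∉ W := by
    intro hxW
    exact absurd (horthW x hxW) (ne_of_lt (hnegW x hxW hx0))
  -- U = W ⊔ span {x}
  set U : Submodule ℝ V := W ⊔ Submodule.span ℝ {x} with hU
  -- B is ≤ 0 on U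
  have hUneg : ∀ u ∈ U, B u u ≤ 0 := by
    intro u hu
    rw [hU, Submodule.mem_sup] at hu
    obtain ⟨w, hw, z, hz, rfl⟩ := hu
    obtain ⟨c, rfl⟩ := Submodule.mem_span_singleton.mp hz
    have h1 : B x w = 0 := horthW w hw
    have h2 : B w x = 0 := by
      have := hsymm.eq x w
      rw [h1] at this; simpa using this.symm
    have h3 : B w w ≤ 0 := by
      by_cases hw0 : w = 0
      · simp [hw0]
      · exact (hnegW w hw hw0).le
    have expand : B (w + c • x) (w + c • x) = B w w + c^2 * B x x := by
      simp only [map_add, LinearMap.add_apply, LinearMap.BilinForm.smul_left,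
        LinearMap.BilinForm.smul_right, LinearMap.map_smul, LinearMap.smul_apply]
      rw [h1, h2]
      ring_nf
    rw [expand]
    nlinarith [sq_nonneg c]
  -- the "negative coordinates" map is injective on U
  have hrsub : ∀ j : Fin r, n - r + (j : ℕ) < n := by
    intro j; omega
  set φ : V →ₗ[ℝ] (Fin r → ℝ) :=
    LinearMap.pi (fun j : Fin r => bsig.coord ⟨n - r + (j : ℕ), hrsub j⟩) with hφ
  have hinj : ∀ u ∈ U, φ u = 0 → u = 0 := by
    intro u hu hphi
    have hcoord : ∀ i : Fin n, n - r ≤ (i : ℕ) → bsig.repr u i = 0 := by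
      intro i hi
      have hj : (i : ℕ) - (n - r) < r := by omega
      have := congrFun hphi ⟨(i : ℕ) - (n - r), hj⟩
      simp only [hφ, LinearMap.pi_apply, Module.Basis.coord_apply, Pi.zero_apply] at this
      have hidx : (⟨n - r + ((i:ℕ) - (n - r)), hrsub ⟨(i:ℕ) - (n - r), hj⟩⟩ : Fin n) = i := by
        apply Fin.ext; simp; omega
      rw [hidx] at this
      exact this
    have hdiag := bilin_diag_expand B bsig horth u
    have hnn : ∀ i ∈ Finset.univ, 0 ≤ (bsig.repr u i)^2 * B (bsig i) (bsig i) := by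
      intro i _
      rcases lt_or_ge (i : ℕ) (n - r) with h | h
      · exact mul_nonneg (sq_nonneg _) ((hsig i).1 h).le
      · rw [hcoord i h]; simp
    have hle := hUneg u hu
    rw [hdiag] at hle
    have hall : ∀ i ∈ Finset.univ, (bsig.repr u i)^2 * B (bsig i) (bsig i) = 0 :=
      (Finset.sum_eq_zero_iff_of_nonneg hnn).mp (le_antisymm hle (Finset.sum_nonneg hnn))
    have hzero : ∀ i : Fin n, bsig.repr u i = 0 := by
      intro i
      rcases lt_or_ge (i : ℕ) (n - r) with h | h
      · have h1 := hall i (Finset.mem_univ i)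
        have hpos := (hsig i).1 h
        have h0 : (bsig.repr u i)^2 = 0 := by
          rcases mul_eq_zero.mp h1 with h' | h'
          · exact h'
          · exact absurd h' hpos.ne'
        exact sq_eq_zero_iff.mp h0
      · exact hcoord i h
    exact bsig.repr.map_eq_zero_iff.mp (Finsupp.ext hzero)
  -- dimension count
  have hWrank : Module.finrank ℝ W = r := by
    rw [hW, finrank_span_eq_card hLI]; simp
  have hinterbot : W ⊓ Submodule.span ℝ {x} = ⊥ := by
    rw [eq_bot_iff]
    intro z hz
    rw [Submodule.mem_inf] at hz
    obtain ⟨hzW, hzx⟩ := hz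
    obtain ⟨c, rfl⟩ := Submodule.mem_span_singleton.mp hzx
    rcases eq_or_ne c 0 with rfl | hc
    · simp
    · exfalso
      apply hxW
      have := W.smul_mem c⁻¹ hzW
      rwa [smul_smul, inv_mul_cancel₀ hc, one_smul] at this
  have hsum := Submodule.finrank_sup_add_finrank_inf_eq W (Submodule.span ℝ {x})
  rw [hinterbot, finrank_bot, hWrank, finrank_span_singleton hx0] at hsum
  have hUrank : Module.finrank ℝ ↥U = r + 1 := by
    rw [hU]; omega
  have hle : Module.finrank ℝ ↥U ≤ Module.finrank ℝ (Fin r → ℝ) := by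
    apply LinearMap.finrank_le_finrank_of_injective (f := φ.comp U.subtype)
    rw [← LinearMap.ker_eq_bot, eq_bot_iff]
    intro u hu
    rw [LinearMap.mem_ker, LinearMap.comp_apply] at hu
    have := hinj u.1 u.2 hu
    simpa [Submodule.mem_bot] using Subtype.ext this
  rw [hUrank, Module.finrank_fintype_fun_eq_card] at hle
  simp at hle


private lemma exists_lower_bound {V : Type*} [AddCommGroup V] [Module ℝ V] {n r : ℕ}
    (B : LinearMap.BilinForm ℝ V) (bL : Module.Basis (Fin n) ℝ V) (C C' : Fin r → V)
    (hpos : ∀ (s : Fin r → ℝ), (∀ j, s j ∈ Icc (0:ℝ) 1) → ∀ x : V,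
      (∀ j, B x ((1 - s j) • C j + s j • C' j) = 0) → x ≠ 0 → 0 < B x x) :
    ∃ c > 0, ∀ x : V, ∀ s : Fin r → ℝ, (∀ j, s j ∈ Icc (0:ℝ) 1) →
      (∀ j, B x ((1 - s j) • C j + s j • C' j) = 0) →
      c * ‖bL.equivFun x‖^2 ≤ B x x := by
  classical
  set g : (Fin n → ℝ) → V := fun y => bL.equivFun.symm y with hg
  -- continuity facts
  have hlin : ∀ w : V, Continuous fun y : Fin n → ℝ => B (g y) w := by
    intro w
    exact LinearMap.continuous_of_finiteDimensional
      (((B.flip w).comp bL.equivFun.symm.toLinearMap))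
  have hquad_eq : ∀ y : Fin n → ℝ, B (g y) (g y)
      = ∑ i, ∑ j, y i * y j * B (bL i) (bL j) := by
    intro y
    rw [hg]
    simp only [Module.Basis.equivFun_symm_apply]
    rw [LinearMap.BilinForm.sum_left]
    refine Finset.sum_congr rfl fun i _ => ?_
    rw [LinearMap.BilinForm.smul_left, LinearMap.BilinForm.sum_right, Finset.mul_sum]
    refine Finset.sum_congr rfl fun j _ => ?_
    rw [LinearMap.BilinForm.smul_right]; ring
  have hquad : Continuous fun y : Fin n → ℝ => B (g y) (g y) := by
    simp only [hquad_eq]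
    refine continuous_finset_sum _ fun i _ => continuous_finset_sum _ fun j _ => ?_
    exact ((continuous_apply i).mul (continuous_apply j)).mul continuous_const
  -- the compact set
  set K : Set ((Fin r → ℝ) × (Fin n → ℝ)) :=
    {p | (∀ j, p.1 j ∈ Icc (0:ℝ) 1) ∧ ‖p.2‖ = 1 ∧
      ∀ j, B (g p.2) ((1 - p.1 j) • C j + p.1 j • C' j) = 0} with hK
  have hKclosed : IsClosed K := by
    have hKeq : K = (⋂ j, {p : (Fin r → ℝ) × (Fin n → ℝ) | p.1 j ∈ Icc (0:ℝ) 1}) ∩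
        ({p : (Fin r → ℝ) × (Fin n → ℝ) | ‖p.2‖ = 1} ∩
          ⋂ j, {p : (Fin r → ℝ) × (Fin n → ℝ) |
            B (g p.2) ((1 - p.1 j) • C j + p.1 j • C' j) = 0}) := by
      ext p
      simp only [hK, Set.mem_setOf_eq, Set.mem_inter_iff, Set.mem_iInter]
    rw [hKeq]
    refine IsClosed.inter (isClosed_iInter fun j => ?_) (IsClosed.inter ?_
      (isClosed_iInter fun j => ?_))
    · exact IsClosed.preimage ((continuous_apply j).comp continuous_fst) isClosed_Icc
    · exact isClosed_eq (continuous_norm.comp continuous_snd) continuous_const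
    · refine isClosed_eq ?_ continuous_const
      have heq2 : (fun p : (Fin r → ℝ) × (Fin n → ℝ) =>
          B (g p.2) ((1 - p.1 j) • C j + p.1 j • C' j))
          = fun p => (1 - p.1 j) * B (g p.2) (C j) + p.1 j * B (g p.2) (C' j) := by
        funext p
        rw [map_add, LinearMap.BilinForm.smul_right, LinearMap.BilinForm.smul_right]
      rw [heq2]
      refine Continuous.add (Continuous.mul ?_ ((hlin (C j)).comp continuous_snd))
        (Continuous.mul ((continuous_apply j).comp continuous_fst)
          ((hlin (C' j)).comp continuous_snd))
      exact (continuous_const.sub ((continuous_apply j).comp continuous_fst))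
  have hKcompact : IsCompact K := by
    refine IsCompact.of_isClosed_subset
      ((isCompact_univ_pi (fun _ : Fin r => isCompact_Icc (a := (0:ℝ)) (b := (1:ℝ)))).prod
        (isCompact_sphere (0 : Fin n → ℝ) 1)) hKclosed ?_
    rintro ⟨s, y⟩ ⟨h1, h2, _⟩
    exact ⟨Set.mem_univ_pi.mpr fun j => h1 j, mem_sphere_zero_iff_norm.mpr h2⟩
  rcases K.eq_empty_or_nonempty with hKe | hKne
  · -- K empty : any constant works, conditions are never satisfiable with x ≠ 0
    refine ⟨1, one_pos, fun x s hs horth => ?_⟩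
    rcases eq_or_ne x 0 with rfl | hx0
    · simp
    · exfalso
      have hy : bL.equivFun x ≠ 0 := by
        intro h
        apply hx0
        have h2 : bL.equivFun.symm (bL.equivFun x) = bL.equivFun.symm 0 := by rw [h]
        rwa [LinearEquiv.symm_apply_apply, map_zero] at h2
      set y : Fin n → ℝ := ‖bL.equivFun x‖⁻¹ • bL.equivFun x with hy2
      have hyn : ‖y‖ = 1 := norm_smul_inv_norm hy
      have hgy : g y = ‖bL.equivFun x‖⁻¹ • x := by
        rw [hg, hy2]
        show bL.equivFun.symm _ = _
        rw [map_smul, LinearEquiv.symm_apply_apply]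
      have : (s, y) ∈ K := by
        refine ⟨hs, hyn, fun j => ?_⟩
        rw [hgy, LinearMap.BilinForm.smul_left, horth j, mul_zero]
      rw [hKe] at this
      exact this
  · obtain ⟨p₀, hp₀, hmin⟩ := hKcompact.exists_isMinOn hKne
      ((hquad.comp continuous_snd).continuousOn)
    set c := B (g p₀.2) (g p₀.2) with hc
    have hc0 : 0 < c := by
      obtain ⟨h1, h2, h3⟩ := hp₀
      refine hpos p₀.1 h1 (g p₀.2) h3 ?_
      intro h
      rw [hg] at h
      have hz : p₀.2 = 0 := by
        have h3 := congrArg bL.equivFun h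
        rwa [LinearEquiv.apply_symm_apply, map_zero] at h3
      rw [hz] at h2
      simp at h2
    refine ⟨c, hc0, fun x s hs horth => ?_⟩
    rcases eq_or_ne x 0 with rfl | hx0
    · simp
    · have hy : bL.equivFun x ≠ 0 := by
        intro h
        apply hx0
        have h2 : bL.equivFun.symm (bL.equivFun x) = bL.equivFun.symm 0 := by rw [h]
        rwa [LinearEquiv.symm_apply_apply, map_zero] at h2
      set y : Fin n → ℝ := ‖bL.equivFun x‖⁻¹ • bL.equivFun x with hy2
      have hyn : ‖y‖ = 1 := norm_smul_inv_norm hy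
      have hgy : g y = ‖bL.equivFun x‖⁻¹ • x := by
        rw [hg, hy2]
        show bL.equivFun.symm _ = _
        rw [map_smul, LinearEquiv.symm_apply_apply]
      have hmem : (s, y) ∈ K := by
        refine ⟨hs, hyn, fun j => ?_⟩
        rw [hgy, LinearMap.BilinForm.smul_left, horth j, mul_zero]
      have hm : B (g p₀.2) (g p₀.2) ≤ B (g y) (g y) :=
        isMinOn_iff.mp hmin (s, y) hmem
      have hqy : B (g y) (g y) = (‖bL.equivFun x‖⁻¹)^2 * B x x := by
        rw [hgy, LinearMap.BilinForm.smul_left, LinearMap.BilinForm.smul_right]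
        ring
      rw [hqy] at hm
      have hnorm : (0:ℝ) < ‖bL.equivFun x‖ := norm_pos_iff.mpr hy
      rw [← hc] at hm
      calc c * ‖bL.equivFun x‖^2 ≤ ((‖bL.equivFun x‖⁻¹)^2 * B x x) * ‖bL.equivFun x‖^2 := by
            apply mul_le_mul_of_nonneg_right hm (by positivity)
        _ = B x x := by
            rw [mul_comm (‖bL.equivFun x‖⁻¹ ^ 2) (B x x), mul_assoc, ← mul_pow,
              inv_mul_cancel₀ hnorm.ne', one_pow, mul_one]


private lemma exists_root_of_sign_ne (a b : ℝ) (h : Real.sign a - Real.sign b ≠ 0) :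
    ∃ s, s ∈ Icc (0:ℝ) 1 ∧ (1 - s) * a + s * b = 0 := by
  have h' : Real.sign a ≠ Real.sign b := sub_ne_zero.mp h
  rcases eq_or_ne a 0 with rfl | ha
  · exact ⟨0, by norm_num⟩
  rcases eq_or_ne b 0 with rfl | hb
  · exact ⟨1, by norm_num⟩
  rcases lt_or_gt_of_ne ha with ha' | ha' <;> rcases lt_or_gt_of_ne hb with hb' | hb'
  · exact absurd (by rw [Real.sign_of_neg ha', Real.sign_of_neg hb']) h'
  · have hd : a - b ≠ 0 := by intro h0; rw [sub_eq_zero] at h0; linarith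
    refine ⟨a / (a - b), ⟨div_nonneg_iff.mpr (Or.inr ⟨ha'.le, by linarith⟩), ?_⟩, ?_⟩
    · rw [div_le_iff_of_neg (by linarith : a - b < 0)]
      linarith
    · field_simp
      ring
  · have hd : a - b ≠ 0 := by intro h0; rw [sub_eq_zero] at h0; linarith
    refine ⟨a / (a - b), ⟨div_nonneg_iff.mpr (Or.inl ⟨ha'.le, by linarith⟩), ?_⟩, ?_⟩
    · rw [div_le_one (by linarith : (0:ℝ) < a - b)]
      linarith
    · field_simp
      ring
  · exact absurd (by rw [Real.sign_of_pos ha', Real.sign_of_pos hb']) h'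


private lemma abs_real_sign_le (t : ℝ) : |Real.sign t| ≤ 1 := by
  rcases lt_trichotomy t 0 with h | h | h
  · simp [Real.sign_of_neg h]
  · simp [h, Real.sign_zero]
  · simp [Real.sign_of_pos h]


/-- Proposition 5.3(ii) of the paper: for signature `(n−r,r)`, if the form is
negative definite on each `r`-plane `span{B_1(s_1), …, B_r(s_r)}`,
`s ∈ [0,1]^r`, then the family `x ↦ Φ_r(x)·e^{−πv(x,x)}`, indexed by
`x ∈ L + μ` for a lattice `L` (the ℤ-span of an ℝ-basis of `V`), is absolutely
summable. -/
theorem summable_phi_r_qseries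
    {V : Type*} [AddCommGroup V] [Module ℝ V]
    (n r : ℕ) (hr : 1 ≤ r) (hrn : r ≤ n)
    (B : LinearMap.BilinForm ℝ V) (hsymm : B.IsSymm) (hnd : B.Nondegenerate)
    (bsig : Module.Basis (Fin n) ℝ V)
    (horth : ∀ i j, i ≠ j → B (bsig i) (bsig j) = 0)
    (hsig : ∀ i : Fin n, ((i : ℕ) < n - r → 0 < B (bsig i) (bsig i)) ∧
        (n - r ≤ (i : ℕ) → B (bsig i) (bsig i) < 0))
    (C C' : Fin r → V)
    (hneg : ∀ s : Fin r → ℝ, (∀ j, s j ∈ Icc (0:ℝ) 1) →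
      LinearIndependent ℝ (fun j : Fin r => (1 - s j) • C j + s j • C' j) ∧
      ∀ w ∈ Submodule.span ℝ (Set.range fun j : Fin r => (1 - s j) • C j + s j • C' j),
        w ≠ 0 → B w w < 0)
    (bL : Module.Basis (Fin n) ℝ V) (μ : V) (v : ℝ) (hv : 0 < v) :
    Summable (fun x : {x : V // ∃ l ∈ Submodule.span ℤ (Set.range ⇑bL), x = l + μ} =>
      |((2:ℝ)^r)⁻¹ *
          ∏ j : Fin r, (Real.sign (B x (C j)) - Real.sign (B x (C' j)))| *
        Real.exp (-Real.pi * v * B x x)) := by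
  classical
  -- positivity on orthogonal complements
  have hposx : ∀ (s : Fin r → ℝ), (∀ j, s j ∈ Icc (0:ℝ) 1) → ∀ x : V,
      (∀ j, B x ((1 - s j) • C j + s j • C' j) = 0) → x ≠ 0 → 0 < B x x := by
    intro s hs x hxorth hx0
    obtain ⟨hLI, hnegW⟩ := hneg s hs
    exact posdef_orthocomp hrn B hsymm bsig horth hsig _ hLI hnegW x hxorth hx0
  obtain ⟨c, hc0, hbound⟩ := exists_lower_bound B bL C C' hposx
  set T := {x : V // ∃ l ∈ Submodule.span ℤ (Set.range ⇑bL), x = l + μ} with hT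
  -- the equivalence with ℤ^n
  have hmem : ∀ m : Fin n → ℤ, ∃ l ∈ Submodule.span ℤ (Set.range ⇑bL),
      bL.equivFun.symm (fun i => (m i : ℝ)) + μ = l + μ := by
    intro m
    refine ⟨bL.equivFun.symm (fun i => (m i : ℝ)), ?_, rfl⟩
    rw [Module.Basis.equivFun_symm_apply]
    refine Submodule.sum_mem _ fun i _ => ?_
    rw [Int.cast_smul_eq_zsmul]
    exact Submodule.smul_mem _ _ (Submodule.subset_span ⟨i, rfl⟩)
  set ψ : (Fin n → ℤ) → T := fun m => ⟨bL.equivFun.symm (fun i => (m i : ℝ)) + μ, hmem m⟩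
    with hψ
  have hbij : Function.Bijective ψ := by
    constructor
    · intro m m' hmm
      have h1 : bL.equivFun.symm (fun i => (m i : ℝ)) + μ
          = bL.equivFun.symm (fun i => (m' i : ℝ)) + μ := congrArg Subtype.val hmm
      have h2 : (fun i => (m i : ℝ)) = (fun i => (m' i : ℝ)) :=
        bL.equivFun.symm.injective (by simpa using h1)
      funext i
      exact_mod_cast congrFun h2 i
    · rintro ⟨x, l, hl, rfl⟩
      obtain ⟨m, hm⟩ := (Submodule.mem_span_range_iff_exists_fun ℤ).mp hl
      refine ⟨m, Subtype.ext ?_⟩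
      show bL.equivFun.symm (fun i => (m i : ℝ)) + μ = l + μ
      rw [Module.Basis.equivFun_symm_apply, ← hm]
      congr 1
      exact Finset.sum_congr rfl fun i _ => Int.cast_smul_eq_zsmul ℝ (m i) (bL i)
  set e : (Fin n → ℤ) ≃ T := Equiv.ofBijective ψ hbij with he
  -- the dominating function
  set a : ℝ := Real.pi * v * c with ha
  have ha0 : 0 < a := by positivity
  have hn0 : 0 < n := lt_of_lt_of_le hr hrn
  set G : T → ℝ := fun x => Real.exp (-a * ‖bL.equivFun (x : V)‖^2) with hG
  -- G is summable
  have hGsumm : Summable G := by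
    rw [← e.summable_iff]
    obtain ⟨t, ht⟩ : ∃ t : Fin n → ℝ, bL.equivFun μ = t := ⟨_, rfl⟩
    have hGe : ∀ m : Fin n → ℤ, (G ∘ e) m
        = Real.exp (-a * ‖(fun i => (m i : ℝ) + t i)‖^2) := by
      intro m
      show Real.exp (-a * ‖bL.equivFun (bL.equivFun.symm (fun i => (m i : ℝ)) + μ)‖^2) = _
      rw [map_add, LinearEquiv.apply_symm_apply, ht]
      rfl
    have hcomp : Summable fun m : Fin n → ℤ =>
        ∏ i, Real.exp (-(a / n) * ((m i : ℝ) + t i)^2) := by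
      refine summable_pi_int (fun i k => Real.exp (-(a / n) * ((k : ℝ) + t i)^2))
        (fun i => summable_exp_shift (a / n) (t i) (by positivity))
        (fun i k => (Real.exp_pos _).le)
    refine hcomp.of_nonneg_of_le (fun m => (Real.exp_pos _).le) (fun m => ?_)
    rw [hGe m, ← Real.exp_sum]
    apply Real.exp_le_exp.mpr
    have hbnd : ∑ i, ((m i : ℝ) + t i)^2 ≤ (n : ℝ) * ‖(fun i => (m i : ℝ) + t i)‖^2 := by
      have : ∀ i ∈ Finset.univ, ((m i : ℝ) + t i)^2 ≤ ‖(fun i => (m i : ℝ) + t i)‖^2 := by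
        intro i _
        have h1 : |(m i : ℝ) + t i| ≤ ‖(fun i => (m i : ℝ) + t i)‖ := by
          simpa [Real.norm_eq_abs] using norm_le_pi_norm (fun i => (m i : ℝ) + t i) i
        calc ((m i : ℝ) + t i)^2 = |(m i : ℝ) + t i|^2 := (sq_abs _).symm
          _ ≤ ‖(fun i => (m i : ℝ) + t i)‖^2 := by
              apply pow_le_pow_left₀ (abs_nonneg _) h1
      calc ∑ i, ((m i : ℝ) + t i)^2 ≤ ∑ _i : Fin n, ‖(fun i => (m i : ℝ) + t i)‖^2 :=
            Finset.sum_le_sum this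
        _ = (n : ℝ) * ‖(fun i => (m i : ℝ) + t i)‖^2 := by
            rw [Finset.sum_const, Finset.card_univ, Fintype.card_fin, nsmul_eq_mul]
    calc ∑ i, -(a / n) * ((m i : ℝ) + t i)^2
        = -(a / n) * ∑ i, ((m i : ℝ) + t i)^2 := by rw [Finset.mul_sum]
      _ ≥ -(a / n) * ((n : ℝ) * ‖(fun i => (m i : ℝ) + t i)‖^2) := by
          exact mul_le_mul_of_nonpos_left hbnd (neg_nonpos.mpr (by positivity))
      _ = -a * ‖(fun i => (m i : ℝ) + t i)‖^2 := by
          field_simp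
  -- comparison
  refine hGsumm.of_nonneg_of_le (fun x => mul_nonneg (abs_nonneg _) (Real.exp_pos _).le)
    (fun x => ?_)
  rcases eq_or_ne (∏ j : Fin r, (Real.sign (B x (C j)) - Real.sign (B x (C' j)))) 0
    with hprod | hprod
  · rw [hprod, mul_zero, abs_zero, zero_mul]
    exact (Real.exp_pos _).le
  · -- choose roots
    have hfac : ∀ j : Fin r, Real.sign (B x (C j)) - Real.sign (B x (C' j)) ≠ 0 :=
      fun j => Finset.prod_ne_zero_iff.mp hprod j (Finset.mem_univ j)
    set s : Fin r → ℝ := fun j => Classical.choose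
      (exists_root_of_sign_ne (B x (C j)) (B x (C' j)) (hfac j)) with hs
    have hsspec : ∀ j, s j ∈ Icc (0:ℝ) 1 ∧
        (1 - s j) * B x (C j) + s j * B x (C' j) = 0 := fun j =>
      Classical.choose_spec (exists_root_of_sign_ne (B x (C j)) (B x (C' j)) (hfac j))
    have horth2 : ∀ j, B (x : V) ((1 - s j) • C j + s j • C' j) = 0 := by
      intro j
      rw [map_add, LinearMap.BilinForm.smul_right, LinearMap.BilinForm.smul_right]
      exact (hsspec j).2
    have hB := hbound (x : V) s (fun j => (hsspec j).1) horth2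
    -- |Φ| ≤ 1
    have hPhi : |((2:ℝ)^r)⁻¹ *
        ∏ j : Fin r, (Real.sign (B x (C j)) - Real.sign (B x (C' j)))| ≤ 1 := by
      rw [abs_mul, abs_inv, abs_pow, abs_two, Finset.abs_prod]
      rw [inv_mul_le_iff₀ (by positivity), mul_one]
      calc ∏ j : Fin r, |Real.sign (B x (C j)) - Real.sign (B x (C' j))|
          ≤ ∏ _j : Fin r, (2:ℝ) := by
            refine Finset.prod_le_prod (fun j _ => abs_nonneg _) (fun j _ => ?_)
            calc |Real.sign (B x (C j)) - Real.sign (B x (C' j))|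
                ≤ |Real.sign (B x (C j))| + |Real.sign (B x (C' j))| := abs_sub _ _
              _ ≤ 1 + 1 := add_le_add (abs_real_sign_le _) (abs_real_sign_le _)
              _ = 2 := by norm_num
        _ = (2:ℝ)^r := by rw [Finset.prod_const, Finset.card_univ, Fintype.card_fin]
    calc |((2:ℝ)^r)⁻¹ *
          ∏ j : Fin r, (Real.sign (B x (C j)) - Real.sign (B x (C' j)))| *
          Real.exp (-Real.pi * v * B x x)
        ≤ 1 * Real.exp (-Real.pi * v * B x x) :=
          mul_le_mul_of_nonneg_right hPhi (Real.exp_pos _).le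
      _ = Real.exp (-Real.pi * v * B x x) := one_mul _
      _ ≤ G x := by
          rw [hG]
          apply Real.exp_le_exp.mpr
          have hπv : (0:ℝ) < Real.pi * v := by positivity
          calc -Real.pi * v * B x x ≤ -Real.pi * v * (c * ‖bL.equivFun (x:V)‖^2) := by
                nlinarith [mul_le_mul_of_nonneg_left hB hπv.le]
            _ = -a * ‖bL.equivFun (x : V)‖^2 := by rw [ha]; ring
end
end

section
/- For all real numbers u₁ and u₂ with u₂ ≠ 0, one has e₂(u₁,u₂) = (2/π)·arctan(u₁/u₂) − ẽ₂(u₁,u₂), where e₂(u₁,u₂) := 2u₂·∫₀¹ e^{−π t² u₂²}·E₁(t·u₁) dt, E₁(u) := 2u·∫₀¹ e^{−π u² v²} dv, and ẽ₂(a,b) := (2/π)·b·e^{−π b²}·∫₀^a e^{−π v²}/(b² + v²) dv. -/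
open Real Set

noncomputable section

/-- The error function `E₁(u) = 2u∫₀¹ e^{−πu²v²} dv`. -/
def E₁ (u : ℝ) : ℝ := 2 * u * ∫ v in (0:ℝ)..1, Real.exp (-Real.pi * u^2 * v^2)

/-- `e₂(u₁,u₂) = 2u₂∫₀¹ e^{−πt²u₂²} E₁(tu₁) dt`. -/
def e₂ (u₁ u₂ : ℝ) : ℝ :=
  2 * u₂ * ∫ t in (0:ℝ)..1, Real.exp (-Real.pi * t^2 * u₂^2) * E₁ (t * u₁)

/-- `ẽ₂(a,b) = (2/π)·b·e^{−πb²}·∫₀^a e^{−πv²}/(b²+v²) dv` (which is `0` for `b = 0`). -/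
def etilde₂ (a b : ℝ) : ℝ :=
  (2 / Real.pi) * b * Real.exp (-Real.pi * b^2) *
    ∫ v in (0:ℝ)..a, Real.exp (-Real.pi * v^2) / (b^2 + v^2)

open MeasureTheory

lemma integral_t_exp (c : ℝ) (hc : 0 < c) :
    ∫ t in (0:ℝ)..1, t * Real.exp (-Real.pi * c * t ^ 2)
      = (1 - Real.exp (-Real.pi * c)) / (2 * Real.pi * c) := by
  have hπc : (2 * Real.pi * c) ≠ 0 := by positivity
  have hderiv : ∀ x ∈ uIcc (0:ℝ) 1,
      HasDerivAt (fun t : ℝ => -Real.exp (-Real.pi * c * t ^ 2) / (2 * Real.pi * c))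
        (x * Real.exp (-Real.pi * c * x ^ 2)) x := by
    intro x _
    have h1 : HasDerivAt (fun t : ℝ => -Real.pi * c * t ^ 2)
        (-Real.pi * c * (2 * x ^ 1)) x := (hasDerivAt_pow 2 x).const_mul _
    have h2 := (h1.exp).neg.div_const (2 * Real.pi * c)
    refine h2.congr_deriv ?_
    rw [div_eq_iff hπc]
    ring
  rw [intervalIntegral.integral_eq_sub_of_hasDerivAt hderiv]
  · simp only [one_pow, mul_one, ne_eq, OfNat.ofNat_ne_zero, not_false_eq_true, zero_pow,
      mul_zero, Real.exp_zero]
    field_simp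
    ring
  · apply Continuous.intervalIntegrable
    continuity

lemma fubini_step (u₁ u₂ : ℝ) :
    (∫ t in (0:ℝ)..1, ∫ v in (0:ℝ)..1,
        t * Real.exp (-Real.pi * (u₂ ^ 2 + u₁ ^ 2 * v ^ 2) * t ^ 2))
      = ∫ v in (0:ℝ)..1, ∫ t in (0:ℝ)..1,
        t * Real.exp (-Real.pi * (u₂ ^ 2 + u₁ ^ 2 * v ^ 2) * t ^ 2) := by
  have hF : Continuous (fun p : ℝ × ℝ =>
      p.1 * Real.exp (-Real.pi * (u₂ ^ 2 + u₁ ^ 2 * p.2 ^ 2) * p.1 ^ 2)) := by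
    fun_prop
  have hint : Integrable
      (Function.uncurry fun t v : ℝ =>
        t * Real.exp (-Real.pi * (u₂ ^ 2 + u₁ ^ 2 * v ^ 2) * t ^ 2))
      ((volume.restrict (Ioc (0:ℝ) 1)).prod (volume.restrict (Ioc (0:ℝ) 1))) := by
    rw [Measure.prod_restrict, ← Measure.volume_eq_prod]
    exact ((hF.continuousOn.integrableOn_compact
      (isCompact_Icc.prod isCompact_Icc : IsCompact (Icc (0:ℝ) 1 ×ˢ Icc (0:ℝ) 1))).mono_set
      (prod_mono Ioc_subset_Icc_self Ioc_subset_Icc_self))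
  simp only [intervalIntegral.integral_of_le (zero_le_one : (0:ℝ) ≤ 1)]
  exact MeasureTheory.integral_integral_swap hint


/-- The identity `e₂(u₁,u₂) = (2/π)·arctan(u₁/u₂) − ẽ₂(u₁,u₂)` for `u₂ ≠ 0`
(last line of the computation of `e₂` in the appendix of the paper). -/
theorem e₂_eq_arctan_sub_etilde₂ (u₁ u₂ : ℝ) (hu₂ : u₂ ≠ 0) :
    e₂ u₁ u₂ = (2 / Real.pi) * Real.arctan (u₁ / u₂) - etilde₂ u₁ u₂ := by
  rcases eq_or_ne u₁ 0 with h1 | h1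
  · subst h1
    simp [e₂, E₁, etilde₂]
  have hcpos : ∀ v : ℝ, 0 < u₂ ^ 2 + u₁ ^ 2 * v ^ 2 := by
    intro v
    have : (0:ℝ) < u₂ ^ 2 := by positivity
    positivity
  have hcne : ∀ v : ℝ, u₂ ^ 2 + u₁ ^ 2 * v ^ 2 ≠ 0 := fun v => (hcpos v).ne'
  -- Step 1: unfold and combine into a double integral
  have key : ∀ t : ℝ, Real.exp (-Real.pi * t ^ 2 * u₂ ^ 2) * E₁ (t * u₁)
      = 2 * u₁ * ∫ v in (0:ℝ)..1,
          t * Real.exp (-Real.pi * (u₂ ^ 2 + u₁ ^ 2 * v ^ 2) * t ^ 2) := by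
    intro t
    unfold E₁
    have hpt : ∀ v : ℝ, t * Real.exp (-Real.pi * (u₂ ^ 2 + u₁ ^ 2 * v ^ 2) * t ^ 2)
        = (t * Real.exp (-Real.pi * t ^ 2 * u₂ ^ 2)) *
            Real.exp (-Real.pi * (t * u₁) ^ 2 * v ^ 2) := by
      intro v
      rw [show -Real.pi * (u₂ ^ 2 + u₁ ^ 2 * v ^ 2) * t ^ 2
          = (-Real.pi * t ^ 2 * u₂ ^ 2) + (-Real.pi * (t * u₁) ^ 2 * v ^ 2) by ring,
        Real.exp_add]
      ring
    simp_rw [hpt]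
    rw [intervalIntegral.integral_const_mul]
    ring
  have step1 : e₂ u₁ u₂ = 4 * u₁ * u₂ *
      ∫ t in (0:ℝ)..1, ∫ v in (0:ℝ)..1,
        t * Real.exp (-Real.pi * (u₂ ^ 2 + u₁ ^ 2 * v ^ 2) * t ^ 2) := by
    unfold e₂
    simp_rw [key]
    rw [intervalIntegral.integral_const_mul]
    ring
  rw [step1, fubini_step]
  -- Step 2: evaluate the inner integral
  have step3 : (fun v : ℝ => ∫ t in (0:ℝ)..1,
      t * Real.exp (-Real.pi * (u₂ ^ 2 + u₁ ^ 2 * v ^ 2) * t ^ 2))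
      = fun v : ℝ => (1 - Real.exp (-Real.pi * (u₂ ^ 2 + u₁ ^ 2 * v ^ 2))) /
        (2 * Real.pi * (u₂ ^ 2 + u₁ ^ 2 * v ^ 2)) :=
    funext fun v => integral_t_exp _ (hcpos v)
  rw [intervalIntegral.integral_congr (fun v _ => congrFun step3 v)]
  -- Step 3: split the integrand
  have hsplit : ∀ v : ℝ, (1 - Real.exp (-Real.pi * (u₂ ^ 2 + u₁ ^ 2 * v ^ 2))) /
      (2 * Real.pi * (u₂ ^ 2 + u₁ ^ 2 * v ^ 2))
      = (1 / (2 * Real.pi)) * (1 / (u₂ ^ 2 + u₁ ^ 2 * v ^ 2)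
          - Real.exp (-Real.pi * (u₂ ^ 2 + u₁ ^ 2 * v ^ 2)) / (u₂ ^ 2 + u₁ ^ 2 * v ^ 2)) := by
    intro v
    have h := hcne v
    field_simp
  simp_rw [hsplit]
  have hI1 : IntervalIntegrable (fun v : ℝ => 1 / (u₂ ^ 2 + u₁ ^ 2 * v ^ 2)) volume 0 1 := by
    apply Continuous.intervalIntegrable
    exact continuous_const.div (by fun_prop) hcne
  have hI2 : IntervalIntegrable (fun v : ℝ =>
      Real.exp (-Real.pi * (u₂ ^ 2 + u₁ ^ 2 * v ^ 2)) / (u₂ ^ 2 + u₁ ^ 2 * v ^ 2)) volume 0 1 := by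
    apply Continuous.intervalIntegrable
    exact (by fun_prop : Continuous fun v : ℝ =>
      Real.exp (-Real.pi * (u₂ ^ 2 + u₁ ^ 2 * v ^ 2))).div (by fun_prop) hcne
  rw [intervalIntegral.integral_const_mul, intervalIntegral.integral_sub hI1 hI2]
  -- Step 4: first integral gives arctan
  have hk : u₁ / u₂ ≠ 0 := div_ne_zero h1 hu₂
  have e1 : (∫ v in (0:ℝ)..1, 1 / (u₂ ^ 2 + u₁ ^ 2 * v ^ 2))
      = Real.arctan (u₁ / u₂) / (u₁ * u₂) := by
    have hrw : ∀ v : ℝ, 1 / (u₂ ^ 2 + u₁ ^ 2 * v ^ 2)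
        = (1 / u₂ ^ 2) * (1 / (1 + ((u₁ / u₂) * v) ^ 2)) := by
      intro v
      have h := hcne v
      rw [div_mul_div_comm, one_mul]
      congr 1
      field_simp
    simp_rw [hrw]
    rw [intervalIntegral.integral_const_mul,
      intervalIntegral.integral_comp_mul_left (fun x => 1 / (1 + x ^ 2)) hk]
    simp only [mul_zero, mul_one, integral_one_div_one_add_sq, Real.arctan_zero, sub_zero,
      smul_eq_mul]
    field_simp
  -- Step 5: second integral gives etilde₂
  have e2' : (∫ v in (0:ℝ)..1,
      Real.exp (-Real.pi * (u₂ ^ 2 + u₁ ^ 2 * v ^ 2)) / (u₂ ^ 2 + u₁ ^ 2 * v ^ 2))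
      = Real.exp (-Real.pi * u₂ ^ 2) * (u₁⁻¹ *
          ∫ w in (0:ℝ)..u₁, Real.exp (-Real.pi * w ^ 2) / (u₂ ^ 2 + w ^ 2)) := by
    have hrw : ∀ v : ℝ, Real.exp (-Real.pi * (u₂ ^ 2 + u₁ ^ 2 * v ^ 2)) / (u₂ ^ 2 + u₁ ^ 2 * v ^ 2)
        = Real.exp (-Real.pi * u₂ ^ 2) *
            (Real.exp (-Real.pi * (u₁ * v) ^ 2) / (u₂ ^ 2 + (u₁ * v) ^ 2)) := by
      intro v
      rw [show u₂ ^ 2 + u₁ ^ 2 * v ^ 2 = u₂ ^ 2 + (u₁ * v) ^ 2 by ring,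
        show -Real.pi * (u₂ ^ 2 + (u₁ * v) ^ 2)
          = -Real.pi * u₂ ^ 2 + -Real.pi * (u₁ * v) ^ 2 by ring,
        Real.exp_add, mul_div_assoc]
    simp_rw [hrw]
    rw [intervalIntegral.integral_const_mul,
      intervalIntegral.integral_comp_mul_left
        (fun w => Real.exp (-Real.pi * w ^ 2) / (u₂ ^ 2 + w ^ 2)) h1]
    simp only [mul_zero, mul_one, smul_eq_mul]
  rw [e1, e2']
  unfold etilde₂
  have hπ : Real.pi ≠ 0 := Real.pi_ne_zero
  field_simp
  ring
end
end

section
/- Let W be a finite-dimensional real vector space equipped with a nondegenerate symmetric bilinear form (·,·) of signature (m,1) with m ≥ 1, and let H := {u ∈ W : (u,u) = −1}. Then for v, v′ ∈ H, the points v and v′ lie in the same path component of H (i.e. there is a continuous path from v to v′ inside H) if and only if (v,v′) < 0. -/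
open Real Set

noncomputable section

/-- In a space of signature `(m,1)`, two timelike vectors are never orthogonal. -/
lemma no_orth_timelike
    {W : Type*} [NormedAddCommGroup W] [NormedSpace ℝ W] [FiniteDimensional ℝ W]
    (m : ℕ)
    (B : LinearMap.BilinForm ℝ W) (hsymm : B.IsSymm)
    (b : Module.Basis (Fin (m + 1)) ℝ W)
    (horth : ∀ i j, i ≠ j → B (b i) (b j) = 0)
    (hsig : ∀ i : Fin (m + 1), ((i : ℕ) < m → 0 < B (b i) (b i)) ∧
        ((i : ℕ) = m → B (b i) (b i) < 0))
    (u w : W) (hu : B u u < 0) (hw : B w w < 0) (huw : B u w = 0) : False := by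
  have hwu : B w u = 0 := by
    have := hsymm.eq u w
    simpa [huw] using this.symm
  set f : (Fin m ⊕ Fin 2) → W :=
    Sum.elim (fun i : Fin m => b i.castSucc) (fun j : Fin 2 => if j = 0 then u else w) with hf
  have hli : LinearIndependent ℝ f := by
    rw [Fintype.linearIndependent_iff]
    intro g hg
    set x : W := ∑ i : Fin m, g (Sum.inl i) • b i.castSucc with hxdef
    set a : ℝ := g (Sum.inr 0) with hadef
    set d : ℝ := g (Sum.inr 1) with hddef
    set y : W := a • u + d • w with hydef
    have hxy : x + y = 0 := by
      rw [Fintype.sum_sum_type] at hg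
      simpa [hf, Fin.sum_univ_two, hxdef, hydef] using hg
    have hxny : x = -y := by linear_combination (norm := abel) hxy
    have hyy : B y y = a * a * B u u + d * d * B w w := by
      simp only [hydef, map_add, map_smul, LinearMap.add_apply, LinearMap.smul_apply,
        smul_eq_mul, huw, hwu]
      ring
    have hxx : B x x = ∑ i : Fin m, g (Sum.inl i) * g (Sum.inl i) *
        B (b i.castSucc) (b i.castSucc) := by
      simp only [hxdef, map_sum, map_smul, LinearMap.sum_apply, LinearMap.smul_apply,
        smul_eq_mul]
      refine Finset.sum_congr rfl fun i _ => ?_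
      rw [Finset.sum_eq_single i]
      · ring
      · intro j _ hji
        rw [horth _ _ (by simpa using (Fin.castSucc_injective m).ne hji)]
        ring
      · intro h; exact absurd (Finset.mem_univ i) h
    have hpos : ∀ i : Fin m, 0 < B (b i.castSucc) (b i.castSucc) := fun i =>
      (hsig i.castSucc).1 (by simpa using i.isLt)
    have hxx_nonneg : 0 ≤ B x x := by
      rw [hxx]
      exact Finset.sum_nonneg fun i _ => mul_nonneg (mul_self_nonneg _) (hpos i).le
    have hxx_eq : B x x = B y y := by rw [hxny]; simp
    have hyy_nonpos : B y y ≤ 0 := by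
      rw [hyy]; nlinarith [mul_self_nonneg a, mul_self_nonneg d]
    have hyy0 : B y y = 0 := le_antisymm hyy_nonpos (hxx_eq ▸ hxx_nonneg)
    have h1 : a * a * B u u ≤ 0 := mul_nonpos_of_nonneg_of_nonpos (mul_self_nonneg a) hu.le
    have h2 : d * d * B w w ≤ 0 := mul_nonpos_of_nonneg_of_nonpos (mul_self_nonneg d) hw.le
    have ha : a = 0 := by
      have h3 : a * a * B u u = 0 := by rw [hyy] at hyy0; linarith
      exact mul_self_eq_zero.mp ((mul_eq_zero.mp h3).resolve_right hu.ne)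
    have hd : d = 0 := by
      have h3 : d * d * B w w = 0 := by rw [hyy] at hyy0; linarith
      exact mul_self_eq_zero.mp ((mul_eq_zero.mp h3).resolve_right hw.ne)
    have hxx0 : B x x = 0 := by rw [hxx_eq, hyy0]
    have hterm : ∀ i ∈ Finset.univ, g (Sum.inl i) * g (Sum.inl i) *
        B (b i.castSucc) (b i.castSucc) = 0 := by
      rw [hxx] at hxx0
      exact (Finset.sum_eq_zero_iff_of_nonneg
        (fun i _ => mul_nonneg (mul_self_nonneg _) (hpos i).le)).mp hxx0
    intro k
    rcases k with i | j
    · have := hterm i (Finset.mem_univ i)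
      have h2 : g (Sum.inl i) * g (Sum.inl i) = 0 := by
        by_contra h
        exact h (by
          rcases mul_eq_zero.mp this with h' | h'
          · exact h'
          · exact absurd h' (hpos i).ne')
      exact mul_self_eq_zero.mp h2
    · fin_cases j
      · exact ha
      · exact hd
  have hcard := hli.fintype_card_le_finrank
  rw [Module.finrank_eq_card_basis b] at hcard
  have : m + 2 ≤ m + 1 := by simpa [Fintype.card_sum] using hcard
  omega

/-- In a Lorentzian space of signature `(m,1)`, `m ≥ 1`, two points `v, v′` of
the two-sheeted hyperboloid `H = {u : (u,u) = −1}` lie in the same path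
component of `H` iff `(v,v′) < 0`. -/
theorem hyperboloid_joinedIn_iff
    {W : Type*} [NormedAddCommGroup W] [NormedSpace ℝ W] [FiniteDimensional ℝ W]
    (m : ℕ) (hm : 1 ≤ m)
    (B : LinearMap.BilinForm ℝ W) (hsymm : B.IsSymm) (hnd : B.Nondegenerate)
    (b : Module.Basis (Fin (m + 1)) ℝ W)
    (horth : ∀ i j, i ≠ j → B (b i) (b j) = 0)
    (hsig : ∀ i : Fin (m + 1), ((i : ℕ) < m → 0 < B (b i) (b i)) ∧
        ((i : ℕ) = m → B (b i) (b i) < 0))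
    (v v' : W) (hv : B v v = -1) (hv' : B v' v' = -1) :
    JoinedIn {u : W | B u u = -1} v v' ↔ B v v' < 0 := by
  constructor
  · rintro ⟨p, hp⟩
    -- forward: continuity + never-zero
    have hcont : Continuous fun s : ℝ => B v (p.extend s) :=
      (B v).continuous_of_finiteDimensional.comp p.continuous_extend
    have hne : ∀ s : ℝ, B v (p.extend s) ≠ 0 := by
      intro s
      have hmem : B (p.extend s) (p.extend s) = -1 := by
        rw [Path.extend]
        exact hp _
      intro h0
      exact no_orth_timelike m B hsymm b horth hsig v (p.extend s)
        (by rw [hv]; norm_num) (by rw [hmem]; norm_num) h0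
    by_contra hle
    push_neg at hle
    have h1 : B v (p.extend 1) = B v v' := by rw [p.extend_one]
    have h0 : B v (p.extend 0) = -1 := by rw [p.extend_zero, hv]
    have : (0 : ℝ) ∈ Icc (B v (p.extend 0)) (B v (p.extend 1)) := by
      rw [h0, h1]; constructor <;> linarith
    obtain ⟨s, _, hs⟩ := intermediate_value_Icc (by norm_num : (0:ℝ) ≤ 1) hcont.continuousOn this
    exact hne s hs
  · intro hc
    set w : ℝ → W := fun s => (1 - s) • v + s • v' with hw
    set q : ℝ → ℝ := fun s => B (w s) (w s) with hq
    have hqeq : ∀ s, q s = -(1-s)^2 - s^2 + 2*s*(1-s)*(B v v') := by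
      intro s
      have hsym : B v' v = B v v' := by simpa using (hsymm.eq v' v)
      simp only [hq, hw, map_add, map_smul, LinearMap.add_apply, LinearMap.smul_apply,
        smul_eq_mul, hv, hv', hsym]
      ring
    have hqneg : ∀ s : ℝ, s ∈ Icc (0:ℝ) 1 → q s < 0 := by
      rintro s ⟨h0, h1⟩
      rw [hqeq]
      nlinarith [sq_nonneg (2*s - 1), mul_nonneg h0 (by linarith : (0:ℝ) ≤ 1 - s)]
    have hwcont : Continuous w := by fun_prop
    have hqcont : Continuous q := by
      have h : q = fun s => -(1-s)^2 - s^2 + 2*s*(1-s)*(B v v') := funext hqeq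
      rw [h]; fun_prop
    set γ : unitInterval → W := fun t => (Real.sqrt (-(q t)))⁻¹ • w t with hγ
    have hsq : ∀ t : unitInterval, Real.sqrt (-(q t)) ≠ 0 := by
      intro t
      exact (Real.sqrt_pos.mpr (by linarith [hqneg t t.2])).ne'
    have hγcont : Continuous γ := by
      apply Continuous.smul
      · exact Continuous.inv₀
          ((continuous_neg.comp (hqcont.comp continuous_subtype_val)).sqrt) hsq
      · exact hwcont.comp continuous_subtype_val
    have hγ0 : γ 0 = v := by
      have : q 0 = -1 := by rw [hqeq]; ring
      simp [hγ, hw, this]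
    have hγ1 : γ 1 = v' := by
      have : q 1 = -1 := by rw [hqeq]; ring
      simp [hγ, hw, this]
    refine ⟨⟨⟨γ, hγcont⟩, hγ0, hγ1⟩, ?_⟩
    intro t
    show B (γ t) (γ t) = -1
    have hq' := hqneg t t.2
    have hs2 : Real.sqrt (-(q t)) ^ 2 = -(q t) := Real.sq_sqrt (by linarith)
    have hBγ : B (γ t) (γ t) = ((Real.sqrt (-(q t)))⁻¹)^2 * q t := by
      simp only [hγ, map_smul, LinearMap.smul_apply, smul_eq_mul]
      have hqt : (B (w (t:ℝ))) (w (t:ℝ)) = q (t:ℝ) := rfl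
      rw [hqt]; ring
    rw [hBγ, inv_pow, hs2, inv_neg, neg_mul, inv_mul_cancel₀ hq'.ne]
end
end

section
/- Let V be an n-dimensional real vector space equipped with a nondegenerate symmetric bilinear form (·,·) of signature (n−2,2), n ≥ 4, and let C₁, C₂, C₁′, C₂′ ∈ V with (C,C) < 0 for each C ∈ {C₁, C₂, C₁′, C₂′}, with Δ(C₁,C₂) > 0, Δ(C₁,C₂′) > 0, Δ(C₁′,C₂) > 0, Δ(C₁′,C₂′) > 0, and suppose the determinant of the 4×4 Gram matrix ((Cᵢ,Cⱼ)) of (C₁, C₁′, C₂, C₂′) is positive. Then: (a) the vectors C₁, C₁′, C₂, C₂′ are linearly independent, and the restriction of (·,·) to the 4-dimensional subspace U := span{C₁, C₁′, C₂, C₂′} is nondegenerate of signature (2,2); (b) the four negative 2-planes span{C₁,C₂}, span{C₁,C₂′}, span{C₁′,C₂}, span{C₁′,C₂′} are pairwise distinct. -/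
open Real Set

noncomputable section

private lemma sumQuad {W : Type*} [AddCommGroup W] [Module ℝ W]
    (B : LinearMap.BilinForm ℝ W) {ι : Type*} [Fintype ι] [DecidableEq ι]
    (y : ι → W) (g : ι → ℝ)
    (ho : ∀ i j, i ≠ j → B (y i) (y j) = 0) :
    B (∑ i, g i • y i) (∑ i, g i • y i) = ∑ i, g i ^ 2 * B (y i) (y i) := by
  simp only [map_sum, LinearMap.sum_apply, map_smul, LinearMap.smul_apply, smul_eq_mul]
  refine Finset.sum_congr rfl fun j _ => ?_
  rw [Finset.sum_eq_single j]
  · ring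
  · intro i _ hij; rw [ho i j hij]; ring
  · intro h; exact absurd (Finset.mem_univ j) h

private lemma bilinSelfSum {W : Type*} [AddCommGroup W] [Module ℝ W]
    (B : LinearMap.BilinForm ℝ W) {ι : Type*} [Fintype ι] [DecidableEq ι]
    (b : Module.Basis ι ℝ W) (ho : ∀ i j, i ≠ j → B (b i) (b j) = 0) (x : W) :
    B x x = ∑ i, (b.repr x i) ^ 2 * B (b i) (b i) := by
  have h := sumQuad B b (fun i => b.repr x i) ho
  rw [b.sum_repr x] at h
  exact h

private lemma negPlane {p q r a b : ℝ} (hp : p < 0) (hq : q < 0)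
    (hΔ : 0 < p * q - r ^ 2) (h : 0 ≤ p * a ^ 2 + 2 * r * a * b + q * b ^ 2) :
    a = 0 ∧ b = 0 := by
  have hb2 : b ^ 2 ≤ 0 := by nlinarith [sq_nonneg (p * a + r * b)]
  have hb : b = 0 := by
    have : b ^ 2 = 0 := le_antisymm hb2 (sq_nonneg b)
    exact pow_eq_zero_iff (two_ne_zero) |>.mp this
  subst hb
  have ha2 : a ^ 2 ≤ 0 := by nlinarith
  have ha : a = 0 := by
    have : a ^ 2 = 0 := le_antisymm ha2 (sq_nonneg a)
    exact pow_eq_zero_iff (by norm_num) |>.mp this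
  exact ⟨ha, rfl⟩

set_option maxHeartbeats 2000000 in
/-- Consequences of the incidence conditions (1.10)–(1.12) of the paper in
signature `(n−2,2)`: if `C₁, C₂, C₁′, C₂′` are negative vectors with
`Δ₁₂, Δ₁₂′, Δ₁′₂, Δ₁′₂′ > 0` and `Δ₁₁′₂₂′ = det((Cᵢ,Cⱼ)) > 0`, then
(a) `C₁, C₁′, C₂, C₂′` are linearly independent and the restriction of the form
to `U = span{C₁, C₁′, C₂, C₂′}` is nondegenerate of signature `(2,2)` (i.e. `U`
has an orthogonal basis with two positive and two negative vectors), and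
(b) the four negative 2-planes `span{C₁,C₂}`, `span{C₁,C₂′}`, `span{C₁′,C₂}`,
`span{C₁′,C₂′}` are pairwise distinct. -/
theorem incidence_conditions_consequences
    {V : Type*} [AddCommGroup V] [Module ℝ V]
    (n : ℕ) (hn : 4 ≤ n)
    (B : LinearMap.BilinForm ℝ V) (hsymm : B.IsSymm) (hnd : B.Nondegenerate)
    (bsig : Module.Basis (Fin n) ℝ V)
    (horth : ∀ i j, i ≠ j → B (bsig i) (bsig j) = 0)
    (hsig : ∀ i : Fin n, ((i : ℕ) < n - 2 → 0 < B (bsig i) (bsig i)) ∧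
        (n - 2 ≤ (i : ℕ) → B (bsig i) (bsig i) < 0))
    (C₁ C₂ C₁' C₂' : V)
    (hC₁ : B C₁ C₁ < 0) (hC₂ : B C₂ C₂ < 0)
    (hC₁' : B C₁' C₁' < 0) (hC₂' : B C₂' C₂' < 0)
    (hΔ12 : 0 < B C₁ C₁ * B C₂ C₂ - (B C₁ C₂)^2)
    (hΔ12' : 0 < B C₁ C₁ * B C₂' C₂' - (B C₁ C₂')^2)
    (hΔ1'2 : 0 < B C₁' C₁' * B C₂ C₂ - (B C₁' C₂)^2)
    (hΔ1'2' : 0 < B C₁' C₁' * B C₂' C₂' - (B C₁' C₂')^2)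
    (hdet : 0 < Matrix.det
      !![B C₁ C₁,  B C₁ C₁',  B C₁ C₂,  B C₁ C₂';
         B C₁' C₁, B C₁' C₁', B C₁' C₂, B C₁' C₂';
         B C₂ C₁,  B C₂ C₁',  B C₂ C₂,  B C₂ C₂';
         B C₂' C₁, B C₂' C₁', B C₂' C₂, B C₂' C₂']) :
    (LinearIndependent ℝ ![C₁, C₁', C₂, C₂'] ∧
      ∃ e : Fin 4 → V,
        Submodule.span ℝ (Set.range e) = Submodule.span ℝ {C₁, C₁', C₂, C₂'} ∧
        (∀ i j, i ≠ j → B (e i) (e j) = 0) ∧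
        (∀ i : Fin 4, ((i : ℕ) < 2 → 0 < B (e i) (e i)) ∧
            (2 ≤ (i : ℕ) → B (e i) (e i) < 0))) ∧
    (Submodule.span ℝ {C₁, C₂} ≠ Submodule.span ℝ {C₁, C₂'} ∧
     Submodule.span ℝ {C₁, C₂} ≠ Submodule.span ℝ {C₁', C₂} ∧
     Submodule.span ℝ {C₁, C₂} ≠ Submodule.span ℝ {C₁', C₂'} ∧
     Submodule.span ℝ {C₁, C₂'} ≠ Submodule.span ℝ {C₁', C₂} ∧
     Submodule.span ℝ {C₁, C₂'} ≠ Submodule.span ℝ {C₁', C₂'} ∧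
     Submodule.span ℝ {C₁', C₂} ≠ Submodule.span ℝ {C₁', C₂'}) := by
  classical
  set w : Fin 4 → V := ![C₁, C₁', C₂, C₂'] with hw
  -- Gram matrix
  set G : Matrix (Fin 4) (Fin 4) ℝ := Matrix.of (fun i j => B (w i) (w j)) with hGdef
  have hGeq : !![B C₁ C₁,  B C₁ C₁',  B C₁ C₂,  B C₁ C₂';
         B C₁' C₁, B C₁' C₁', B C₁' C₂, B C₁' C₂';
         B C₂ C₁,  B C₂ C₁',  B C₂ C₂,  B C₂ C₂';
         B C₂' C₁, B C₂' C₁', B C₂' C₂, B C₂' C₂'] = G := by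
    ext i j
    fin_cases i <;> fin_cases j <;> simp [hGdef, hw]
  have hdetG : G.det ≠ 0 := by rw [← hGeq]; exact ne_of_gt hdet
  -- kernel trick
  have hker : ∀ c : Fin 4 → ℝ, (∀ m, B (w m) (∑ k, c k • w k) = 0) → c = 0 := by
    intro c hc
    apply Matrix.eq_zero_of_mulVec_eq_zero hdetG
    funext m
    have h2 : B (w m) (∑ k, c k • w k) = ∑ k, G m k * c k := by
      rw [map_sum]
      refine Finset.sum_congr rfl fun k _ => ?_
      rw [map_smul, smul_eq_mul, mul_comm]
      rfl
    have : G.mulVec c m = ∑ k, G m k * c k := by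
      simp [Matrix.mulVec, dotProduct]
    rw [this, ← h2, hc m]
    rfl
  have hLI : LinearIndependent ℝ w := by
    rw [Fintype.linearIndependent_iff]
    intro g hg i
    have := hker g (fun m => by rw [hg, map_zero])
    exact congrFun this i
  -- the subspace U
  set U : Submodule ℝ V := Submodule.span ℝ ({C₁, C₁', C₂, C₂'} : Set V) with hUdef
  have hrange : Set.range w = ({C₁, C₁', C₂, C₂'} : Set V) := by
    ext x
    constructor
    · rintro ⟨i, rfl⟩; fin_cases i <;> simp [hw]
    · intro hx
      rcases hx with rfl | rfl | rfl | rfl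
      exacts [⟨0, rfl⟩, ⟨1, rfl⟩, ⟨2, rfl⟩, ⟨3, rfl⟩]
  have hUspan : Submodule.span ℝ (Set.range w) = U := by rw [hrange]
  haveI : FiniteDimensional ℝ U := FiniteDimensional.span_of_finite ℝ (Set.toFinite _)
  have hrank : Module.finrank ℝ U = 4 := by
    rw [← hUspan, finrank_span_eq_card hLI]
    simp
  -- restricted form and orthogonal basis
  set B' : LinearMap.BilinForm ℝ U := B.restrict U with hB'def
  have hB'apply : ∀ x y : U, B' x y = B (x : V) (y : V) := fun x y => rfl
  have hsymm' : B'.IsSymm := by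
    refine ⟨fun x y => ?_⟩
    rw [hB'apply, hB'apply]
    exact hsymm.eq _ _
  haveI : Invertible (2 : ℝ) := invertibleOfNonzero two_ne_zero
  obtain ⟨v0, hv0⟩ := LinearMap.BilinForm.exists_orthogonal_basis (LinearMap.BilinForm.isSymm_iff.mp hsymm')
  set v' : Module.Basis (Fin 4) ℝ U := v0.reindex (finCongr hrank) with hv'def
  have hov' : ∀ i j : Fin 4, i ≠ j → B' (v' i) (v' j) = 0 := by
    intro i j hij
    rw [hv'def, Module.Basis.reindex_apply, Module.Basis.reindex_apply]
    exact LinearMap.isOrthoᵢ_def.mp hv0 _ _ ((finCongr hrank).symm.injective.ne hij)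
  have hoV : ∀ a b : Fin 4, a ≠ b → B ((v' a : U) : V) ((v' b : U) : V) = 0 := by
    intro a b hab
    rw [← hB'apply]
    exact hov' a b hab
  set d : Fin 4 → ℝ := fun i => B' (v' i) (v' i) with hddef
  have hdV : ∀ a : Fin 4, B ((v' a : U) : V) ((v' a : U) : V) = d a := fun a => rfl
  -- nondegeneracy of the restriction: no diagonal entry vanishes
  have hdne : ∀ j, d j ≠ 0 := by
    intro j hdj
    have hall : ∀ i, B' (v' j) (v' i) = 0 := by
      intro i
      by_cases h : i = j
      · subst h; exact hdj
      · exact hov' j i (Ne.symm h)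
    have hallu : ∀ u : U, B ((v' j : U) : V) (u : V) = 0 := by
      intro u
      rw [← hB'apply, ← v'.sum_repr u, map_sum]
      apply Finset.sum_eq_zero
      intro i _
      rw [map_smul, hall i, smul_zero]
    have hmem : ((v' j : U) : V) ∈ Submodule.span ℝ (Set.range w) := by
      rw [hUspan]; exact (v' j).2
    obtain ⟨c, hc⟩ := Submodule.mem_span_range_iff_exists_fun ℝ |>.mp hmem
    have hc0 : c = 0 := by
      apply hker
      intro m
      rw [hc]
      have hmU : w m ∈ U := by
        rw [← hUspan]; exact Submodule.subset_span ⟨m, rfl⟩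
      have := hallu ⟨w m, hmU⟩
      calc B (w m) ((v' j : U) : V) = B ((v' j : U) : V) (w m) := (hsymm.eq _ _).symm
        _ = 0 := this
    rw [hc0] at hc
    simp at hc
    exact v'.ne_zero j (Subtype.coe_injective hc.symm)
  -- the set of negative indices
  set S : Finset (Fin 4) := Finset.univ.filter (fun i => d i < 0) with hSdef
  -- indices of the two negative basis vectors of bsig
  have hn2 : n - 2 < n := by omega
  have hn1 : n - 1 < n := by omega
  set i2 : Fin n := ⟨n - 2, hn2⟩ with hi2def
  set i3 : Fin n := ⟨n - 1, hn1⟩ with hi3def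
  have hamb : ∀ x : V, bsig.repr x i2 = 0 → bsig.repr x i3 = 0 → 0 ≤ B x x := by
    intro x h2 h3
    rw [bilinSelfSum B bsig horth x]
    apply Finset.sum_nonneg
    intro i _
    by_cases h : (i : ℕ) < n - 2
    · exact mul_nonneg (sq_nonneg _) (le_of_lt ((hsig i).1 h))
    · have hin := i.isLt
      have : i = i2 ∨ i = i3 := by
        rcases (by omega : (i : ℕ) = n - 2 ∨ (i : ℕ) = n - 1) with h' | h'
        · left; exact Fin.ext h'
        · right; exact Fin.ext h'
      rcases this with rfl | rfl
      · rw [h2]; simp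
      · rw [h3]; simp
  -- claim 1 : S.card ≤ 2
  have claim1 : S.card ≤ 2 := by
    set F : V →ₗ[ℝ] (Fin 2 → ℝ) := LinearMap.pi ![bsig.coord i2, bsig.coord i3] with hFdef
    have hliF : LinearIndependent ℝ (fun s : ↥S => F ((v' (s : Fin 4) : U) : V)) := by
      rw [Fintype.linearIndependent_iff]
      intro g hg
      set x : V := ∑ s : ↥S, g s • ((v' (s : Fin 4) : U) : V) with hx
      have hFx : F x = 0 := by
        rw [hx, map_sum]
        simpa [map_smul] using hg
      have h2 : bsig.repr x i2 = 0 := by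
        have := congrFun hFx 0
        simpa [hFdef, LinearMap.pi_apply] using this
      have h3 : bsig.repr x i3 = 0 := by
        have := congrFun hFx 1
        simpa [hFdef, LinearMap.pi_apply] using this
      have hnn := hamb x h2 h3
      have hxx : B x x = ∑ s : ↥S, g s ^ 2 * d (s : Fin 4) := by
        rw [hx, sumQuad B _ g (fun s t hst => hoV _ _ (Subtype.coe_injective.ne hst))]
        exact Finset.sum_congr rfl fun s _ => by rw [hdV]
      have hterm : ∀ s : ↥S, g s ^ 2 * d (s : Fin 4) ≤ 0 := by
        intro s
        have hds : d (s : Fin 4) < 0 := (Finset.mem_filter.mp s.2).2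
        exact mul_nonpos_of_nonneg_of_nonpos (sq_nonneg _) (le_of_lt hds)
      have hsum0 : ∑ s : ↥S, g s ^ 2 * d (s : Fin 4) = 0 := by
        refine le_antisymm (Finset.sum_nonpos fun s _ => hterm s) ?_
        rw [← hxx]; exact hnn
      intro s
      have := (Finset.sum_eq_zero_iff_of_nonpos
        (fun s _ => hterm s)).mp hsum0 s (Finset.mem_univ s)
      have hds : d (s : Fin 4) < 0 := (Finset.mem_filter.mp s.2).2
      have hg2 : g s ^ 2 = 0 := by
        rcases mul_eq_zero.mp this with h | h
        · exact h
        · exact absurd h (ne_of_lt hds)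
      exact pow_eq_zero_iff two_ne_zero |>.mp hg2
    have hcard := hliF.fintype_card_le_finrank
    simpa [Module.finrank_fintype_fun_eq_card, Fintype.card_coe] using hcard
  -- claim 2 : 2 ≤ S.card
  have hC1U : C₁ ∈ U := Submodule.subset_span (by simp)
  have hC2U : C₂ ∈ U := Submodule.subset_span (by simp)
  have claim2 : 2 ≤ S.card := by
    set Φ : U →ₗ[ℝ] (↥S → ℝ) := LinearMap.pi (fun s : ↥S => v'.coord (s : Fin 4)) with hΦdef
    have hli2 : LinearIndependent ℝ ![Φ ⟨C₁, hC1U⟩, Φ ⟨C₂, hC2U⟩] := by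
      rw [Fintype.linearIndependent_iff]
      intro g hg
      set u : U := g 0 • (⟨C₁, hC1U⟩ : U) + g 1 • (⟨C₂, hC2U⟩ : U) with hu
      have hΦu : Φ u = 0 := by
        rw [hu, map_add, map_smul, map_smul]
        rw [Fin.sum_univ_two] at hg
        simpa using hg
      have hcoord : ∀ s : ↥S, v'.repr u (s : Fin 4) = 0 := by
        intro s
        have := congrFun hΦu s
        simpa [hΦdef, LinearMap.pi_apply] using this
      have hge : 0 ≤ B' u u := by
        rw [bilinSelfSum B' v' hov' u]
        apply Finset.sum_nonneg
        intro i _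
        by_cases hiS : i ∈ S
        · rw [hcoord ⟨i, hiS⟩]; simp
        · have hnl : ¬ d i < 0 := fun hlt => hiS (Finset.mem_filter.mpr ⟨Finset.mem_univ _, hlt⟩)
          exact mul_nonneg (sq_nonneg _) (not_lt.mp hnl)
      have hcoe : ((u : U) : V) = g 0 • C₁ + g 1 • C₂ := by
        rw [hu]; simp
      have hgeV : 0 ≤ B (g 0 • C₁ + g 1 • C₂) (g 0 • C₁ + g 1 • C₂) := by
        rw [← hcoe, ← hB'apply]; exact hge
      have hs' : B C₂ C₁ = B C₁ C₂ := (hsymm.eq C₁ C₂).symm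
      have hexp : B (g 0 • C₁ + g 1 • C₂) (g 0 • C₁ + g 1 • C₂)
          = B C₁ C₁ * (g 0) ^ 2 + 2 * (B C₁ C₂) * (g 0) * (g 1) + B C₂ C₂ * (g 1) ^ 2 := by
        simp only [map_add, map_smul, LinearMap.add_apply, LinearMap.smul_apply, smul_eq_mul]
        rw [hs']; ring
      rw [hexp] at hgeV
      obtain ⟨h0, h1⟩ := negPlane (a := g 0) (b := g 1) hC₁ hC₂ hΔ12 (by linarith)
      intro i
      fin_cases i
      · exact h0
      · exact h1
    have hcard := hli2.fintype_card_le_finrank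
    simpa [Module.finrank_fintype_fun_eq_card, Fintype.card_coe] using hcard
  have hScard : S.card = 2 := le_antisymm claim1 claim2
  have hTcard : Sᶜ.card = 2 := by
    rw [Finset.card_compl, hScard]
    simp
  obtain ⟨x1, x2, hx12, hSeq⟩ := Finset.card_eq_two.mp hScard
  obtain ⟨y1, y2, hy12, hTeq⟩ := Finset.card_eq_two.mp hTcard
  have hx1S : x1 ∈ S := by rw [hSeq]; simp
  have hx2S : x2 ∈ S := by rw [hSeq]; simp
  have hy1T : y1 ∈ Sᶜ := by rw [hTeq]; simp
  have hy2T : y2 ∈ Sᶜ := by rw [hTeq]; simp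
  have hy1S : y1 ∉ S := Finset.mem_compl.mp hy1T
  have hy2S : y2 ∉ S := Finset.mem_compl.mp hy2T
  have hdx1 : d x1 < 0 := (Finset.mem_filter.mp hx1S).2
  have hdx2 : d x2 < 0 := (Finset.mem_filter.mp hx2S).2
  have hdy1 : 0 < d y1 := by
    have h1 : ¬ d y1 < 0 := fun h => hy1S (Finset.mem_filter.mpr ⟨Finset.mem_univ _, h⟩)
    exact lt_of_le_of_ne (not_lt.mp h1) (Ne.symm (hdne y1))
  have hdy2 : 0 < d y2 := by
    have h1 : ¬ d y2 < 0 := fun h => hy2S (Finset.mem_filter.mpr ⟨Finset.mem_univ _, h⟩)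
    exact lt_of_le_of_ne (not_lt.mp h1) (Ne.symm (hdne y2))
  have hy1x1 : y1 ≠ x1 := fun h => hy1S (h ▸ hx1S)
  have hy1x2 : y1 ≠ x2 := fun h => hy1S (h ▸ hx2S)
  have hy2x1 : y2 ≠ x1 := fun h => hy2S (h ▸ hx1S)
  have hy2x2 : y2 ≠ x2 := fun h => hy2S (h ▸ hx2S)
  set e : Fin 4 → V := ![((v' y1 : U) : V), ((v' y2 : U) : V), ((v' x1 : U) : V), ((v' x2 : U) : V)] with hedef
  have huniv : ∀ m : Fin 4, m = y1 ∨ m = y2 ∨ m = x1 ∨ m = x2 := by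
    intro m
    by_cases hm : m ∈ S
    · rw [hSeq] at hm
      simp only [Finset.mem_insert, Finset.mem_singleton] at hm
      tauto
    · have : m ∈ Sᶜ := Finset.mem_compl.mpr hm
      rw [hTeq] at this
      simp only [Finset.mem_insert, Finset.mem_singleton] at this
      tauto
  have hre : Set.range e = Subtype.val '' Set.range (⇑v') := by
    ext z
    constructor
    · rintro ⟨k, rfl⟩
      fin_cases k
      · refine ⟨v' y1, Set.mem_range_self _, ?_⟩; simp [hedef]
      · refine ⟨v' y2, Set.mem_range_self _, ?_⟩; simp [hedef]
      · refine ⟨v' x1, Set.mem_range_self _, ?_⟩; simp [hedef]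
      · refine ⟨v' x2, Set.mem_range_self _, ?_⟩; simp [hedef]
    · rintro ⟨yy, ⟨m, rfl⟩, rfl⟩
      rcases huniv m with rfl | rfl | rfl | rfl
      · refine ⟨0, ?_⟩; simp [hedef]
      · refine ⟨1, ?_⟩; simp [hedef]
      · refine ⟨2, ?_⟩; simp [hedef]
      · refine ⟨3, ?_⟩; simp [hedef]
  have hspan_e : Submodule.span ℝ (Set.range e) = U := by
    rw [hre, ← Submodule.coe_subtype, Submodule.span_image, Module.Basis.span_eq,
      Submodule.map_top, Submodule.range_subtype]
  refine ⟨⟨hLI, e, hspan_e, ?_, ?_⟩, ?_, ?_, ?_, ?_, ?_, ?_⟩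
  · -- orthogonality
    intro a b hab
    fin_cases a <;> fin_cases b <;>
      first
        | exact absurd rfl hab
        | exact hoV _ _ hy12
        | exact hoV _ _ hy12.symm
        | exact hoV _ _ hx12
        | exact hoV _ _ hx12.symm
        | exact hoV _ _ hy1x1
        | exact hoV _ _ hy1x1.symm
        | exact hoV _ _ hy1x2
        | exact hoV _ _ hy1x2.symm
        | exact hoV _ _ hy2x1
        | exact hoV _ _ hy2x1.symm
        | exact hoV _ _ hy2x2
        | exact hoV _ _ hy2x2.symm
  · -- signs
    intro i
    fin_cases i <;> refine ⟨fun h => ?_, fun h => ?_⟩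
    · exact hdV y1 ▸ hdy1
    · simp at h
    · exact hdV y2 ▸ hdy2
    · simp at h
    · simp at h
    · exact hdV x1 ▸ hdx1
    · simp at h
    · exact hdV x2 ▸ hdx2
  all_goals intro hEq
  · -- span{C₁,C₂} = span{C₁,C₂'} : C₂' = w 3 would lie in span (w '' {0,2})
    have h1 : C₂' ∈ Submodule.span ℝ ({C₁, C₂} : Set V) := by
      rw [hEq]; exact Submodule.subset_span (by simp)
    have h2 : ({C₁, C₂} : Set V) = w '' {0, 2} := by
      rw [hw]; simp [Set.image_insert_eq]
    rw [h2] at h1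
    exact hLI.notMem_span_image (s := {0, 2}) (x := 3) (by simp only [Set.mem_insert_iff, Set.mem_singleton_iff]; decide) h1
  · -- span{C₁,C₂} = span{C₁',C₂} : C₁' = w 1 in span (w '' {0,2})
    have h1 : C₁' ∈ Submodule.span ℝ ({C₁, C₂} : Set V) := by
      rw [hEq]; exact Submodule.subset_span (by simp)
    have h2 : ({C₁, C₂} : Set V) = w '' {0, 2} := by
      rw [hw]; simp [Set.image_insert_eq]
    rw [h2] at h1
    exact hLI.notMem_span_image (s := {0, 2}) (x := 1) (by simp only [Set.mem_insert_iff, Set.mem_singleton_iff]; decide) h1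
  · -- span{C₁,C₂} = span{C₁',C₂'} : C₁' = w 1 in span (w '' {0,2})
    have h1 : C₁' ∈ Submodule.span ℝ ({C₁, C₂} : Set V) := by
      rw [hEq]; exact Submodule.subset_span (by simp)
    have h2 : ({C₁, C₂} : Set V) = w '' {0, 2} := by
      rw [hw]; simp [Set.image_insert_eq]
    rw [h2] at h1
    exact hLI.notMem_span_image (s := {0, 2}) (x := 1) (by simp only [Set.mem_insert_iff, Set.mem_singleton_iff]; decide) h1
  · -- span{C₁,C₂'} = span{C₁',C₂} : C₁' = w 1 in span (w '' {0,3})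
    have h1 : C₁' ∈ Submodule.span ℝ ({C₁, C₂'} : Set V) := by
      rw [hEq]; exact Submodule.subset_span (by simp)
    have h2 : ({C₁, C₂'} : Set V) = w '' {0, 3} := by
      rw [hw]; simp [Set.image_insert_eq]
    rw [h2] at h1
    exact hLI.notMem_span_image (s := {0, 3}) (x := 1) (by simp only [Set.mem_insert_iff, Set.mem_singleton_iff]; decide) h1
  · -- span{C₁,C₂'} = span{C₁',C₂'} : C₁' = w 1 in span (w '' {0,3})
    have h1 : C₁' ∈ Submodule.span ℝ ({C₁, C₂'} : Set V) := by
      rw [hEq]; exact Submodule.subset_span (by simp)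
    have h2 : ({C₁, C₂'} : Set V) = w '' {0, 3} := by
      rw [hw]; simp [Set.image_insert_eq]
    rw [h2] at h1
    exact hLI.notMem_span_image (s := {0, 3}) (x := 1) (by simp only [Set.mem_insert_iff, Set.mem_singleton_iff]; decide) h1
  · -- span{C₁',C₂} = span{C₁',C₂'} : C₂' = w 3 in span (w '' {1,2})
    have h1 : C₂' ∈ Submodule.span ℝ ({C₁', C₂} : Set V) := by
      rw [hEq]; exact Submodule.subset_span (by simp)
    have h2 : ({C₁', C₂} : Set V) = w '' {1, 2} := by
      rw [hw]; simp [Set.image_insert_eq]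
    rw [h2] at h1
    exact hLI.notMem_span_image (s := {1, 2}) (x := 3) (by simp only [Set.mem_insert_iff, Set.mem_singleton_iff]; decide) h1
end
end
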